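/- arXiv:1712.01979 — 11 statements merged into one kernel-verified Lean document; each statement's English description precedes it below -/
import Mathlib

section
/- The Deuring polynomial of degree n satisfies H{n}(λ) = (1−λ)^n · P_n((1+λ)/(1−λ)), where P_n is the degree-n Legendre polynomial, as an identity of rational functions over ℚ (equivalently, of polynomials after clearing (1−λ)^n). -/
open Polynomial Finset

/-- The Deuring polynomial `H{n}(λ) = ∑_{i=0}^n (n choose i)^2 λ^i`. -/
noncomputable def deuring (R : Type*) [CommRing R] (n : ℕ) : Polynomial R :=
  ∑ i ∈ Finset.range (n + 1), Polynomial.C ((n.choose i : R) ^ 2) * Polynomial.X ^ i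

/-- The Legendre polynomial of degree `n`,
`P_n(x) = 2^{-n} ∑_{k=0}^n (n choose k)^2 (x-1)^{n-k} (x+1)^k`. -/
noncomputable def legendre (n : ℕ) : Polynomial ℚ :=
  Polynomial.C ((2 : ℚ) ^ n)⁻¹ *
    ∑ k ∈ Finset.range (n + 1),
      Polynomial.C ((n.choose k : ℚ) ^ 2) * (Polynomial.X - 1) ^ (n - k) * (Polynomial.X + 1) ^ k

theorem deuring_eq_legendre (n : ℕ) (lam : ℚ) (hlam : lam ≠ 1) :
    (deuring ℚ n).eval lam =
      (1 - lam) ^ n * (legendre n).eval ((1 + lam) / (1 - lam)) := by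
  have h1 : (1 : ℚ) - lam ≠ 0 := sub_ne_zero.mpr (Ne.symm hlam)
  simp only [deuring, legendre, eval_mul, eval_finset_sum, eval_pow, eval_C, eval_X,
    eval_sub, eval_add, eval_one]
  rw [Finset.mul_sum, Finset.mul_sum, ← Finset.sum_range_reflect]
  apply Finset.sum_congr rfl
  intro k hk
  have hk' : k ≤ n := Nat.lt_succ_iff.mp (Finset.mem_range.mp hk)
  rw [Nat.add_sub_cancel, Nat.choose_symm hk']
  have hx1 : (1 + lam) / (1 - lam) - 1 = 2 * lam / (1 - lam) := by field_simp; ring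
  have hx2 : (1 + lam) / (1 - lam) + 1 = 2 / (1 - lam) := by field_simp; ring
  rw [hx1, hx2, div_pow, div_pow, mul_pow]
  have h2 : (2 : ℚ) ^ n = 2 ^ (n - k) * 2 ^ k := by
    rw [← pow_add, Nat.sub_add_cancel hk']
  have h3 : (1 - lam) ^ n = (1 - lam) ^ (n - k) * (1 - lam) ^ k := by
    rw [← pow_add, Nat.sub_add_cancel hk']
  rw [h2, h3]
  field_simp
end

section
/- (Schur's congruence) Fix a prime p and write the base-p expansion n = b_0 + b_1 p + ⋯ + b_e p^e with 0 ≤ b_i < p. Then in 𝔽_p[λ], H{n} = H{b_0} · H{b_1}^{p} · H{b_2}^{p^2} ⋯ H{b_e}^{p^e}. -/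
open Polynomial Finset

/-- `deuring` with the sum extended to any range containing `n + 1`. -/
lemma deuring_eq_sum_range {R : Type*} [CommRing R] (n N : ℕ) (hN : n + 1 ≤ N) :
    deuring R n = ∑ i ∈ Finset.range N, Polynomial.C ((n.choose i : R) ^ 2) * Polynomial.X ^ i := by
  rw [deuring]
  apply Finset.sum_subset (Finset.range_subset_range.2 hN)
  intro i _ hi
  rw [Finset.mem_range, not_lt] at hi
  rw [Nat.choose_eq_zero_of_lt (by omega)]
  simp

lemma choose_sq_cast (p : ℕ) [Fact p.Prime] (a m i j : ℕ) (ha : a < p) (hi : i < p) :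
    (((a + m * p).choose (i + j * p) : ZMod p)) ^ 2
      = ((a.choose i : ZMod p)) ^ 2 * ((m.choose j : ZMod p)) ^ 2 := by
  have hppos := (Fact.out (p := p.Prime)).pos
  have h := (Choose.choose_modEq_choose_mod_mul_choose_div
      (n := a + m * p) (k := i + j * p) (p := p))
  rw [← ZMod.intCast_eq_intCast_iff] at h
  have hn1 : (a + m * p) % p = a := by
    rw [Nat.add_mul_mod_self_right, Nat.mod_eq_of_lt ha]
  have hn2 : (a + m * p) / p = m := by
    rw [Nat.add_mul_div_right _ _ hppos, Nat.div_eq_of_lt ha, zero_add]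
  have hk1 : (i + j * p) % p = i := by
    rw [Nat.add_mul_mod_self_right, Nat.mod_eq_of_lt hi]
  have hk2 : (i + j * p) / p = j := by
    rw [Nat.add_mul_div_right _ _ hppos, Nat.div_eq_of_lt hi, zero_add]
  rw [hn1, hn2, hk1, hk2] at h
  push_cast at h
  rw [h, mul_pow]

/-- Key step: `H_{a + mp} = H_a · H_m^p` in `𝔽_p[λ]` when `a < p`. -/
lemma deuring_add_mul (p : ℕ) [Fact p.Prime] (a m : ℕ) (ha : a < p) :
    deuring (ZMod p) (a + m * p) = deuring (ZMod p) a * (deuring (ZMod p) m) ^ p := by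
  have hp : p.Prime := Fact.out
  have hfrob : (deuring (ZMod p) m) ^ p = Polynomial.expand (ZMod p) p (deuring (ZMod p) m) := by
    rw [← Polynomial.map_frobenius_expand (p := p), ZMod.frobenius_zmod, Polynomial.map_id]
  rw [hfrob, deuring_eq_sum_range (a + m * p) (p * (m + 1)) (by nlinarith [hp.pos]),
    deuring_eq_sum_range a p (by omega), deuring]
  rw [map_sum]
  simp only [map_mul, Polynomial.expand_C, map_pow, Polynomial.expand_X]
  rw [Finset.sum_mul_sum, ← Finset.sum_product']
  symm
  apply Finset.sum_nbij' (i := fun x => x.1 + x.2 * p) (j := fun k => (k % p, k / p))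
  · intro x hx
    simp only [Finset.mem_product, Finset.mem_range] at hx
    rw [Finset.mem_range]
    nlinarith [hx.1, hx.2]
  · intro k hk
    rw [Finset.mem_range] at hk
    simp only [Finset.mem_product, Finset.mem_range]
    exact ⟨Nat.mod_lt _ hp.pos, Nat.div_lt_of_lt_mul hk⟩
  · intro x hx
    simp only [Finset.mem_product, Finset.mem_range] at hx
    ext
    · simp [Nat.add_mul_mod_self_right, Nat.mod_eq_of_lt hx.1]
    · simp [Nat.add_mul_div_right _ _ hp.pos, Nat.div_eq_of_lt hx.1]
  · intro k _
    simp [Nat.mod_add_div']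
  · intro x hx
    simp only [Finset.mem_product, Finset.mem_range] at hx
    rw [← Polynomial.C_pow, ← Polynomial.C_pow, ← Polynomial.C_pow,
      choose_sq_cast p a m x.1 x.2 ha hx.1, Polynomial.C_mul, ← pow_mul]
    ring

/-- Schur's congruence. -/
theorem deuring_schur (p : ℕ) (hp : p.Prime) (n e : ℕ) (b : ℕ → ℕ)
    (hb : ∀ i ≤ e, b i < p)
    (hn : n = ∑ i ∈ Finset.range (e + 1), b i * p ^ i) :
    deuring (ZMod p) n = ∏ i ∈ Finset.range (e + 1), (deuring (ZMod p) (b i)) ^ (p ^ i) := by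
  haveI : Fact p.Prime := ⟨hp⟩
  subst hn
  induction e generalizing b with
  | zero => simp
  | succ e ih =>
    have hsum : ∑ i ∈ Finset.range (e + 1 + 1), b i * p ^ i
        = b 0 + (∑ i ∈ Finset.range (e + 1), b (i + 1) * p ^ i) * p := by
      rw [Finset.sum_range_succ' (fun i => b i * p ^ i) (e + 1), Finset.sum_mul]
      simp [pow_succ, mul_assoc, add_comm]
    rw [hsum, deuring_add_mul p _ _ (hb 0 (by omega)),
      ih (fun i => b (i + 1)) (fun i hi => hb (i + 1) (by omega))]
    rw [Finset.prod_range_succ' (fun i => (deuring (ZMod p) (b i)) ^ (p ^ i)) (e + 1)]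
    simp only [pow_succ, pow_mul, Finset.prod_pow, pow_zero, pow_one]
    ring
end

section
/- For an odd prime p and any e ≥ 1, in 𝔽_p[λ] one has H{(p^e−1)/2} = H{(p−1)/2}^{1 + p + ⋯ + p^{e−1}}. -/
open Polynomial Finset

lemma sum_range_mul_eq {M : Type*} [AddCommMonoid M] (p n : ℕ) (hp : 0 < p) (f : ℕ → M) :
    ∑ k ∈ Finset.range (p * n), f k
      = ∑ i ∈ Finset.range p, ∑ j ∈ Finset.range n, f (i + p * j) := by
  rw [← Finset.sum_product']
  apply Finset.sum_nbij' (fun k => (k % p, k / p)) (fun x => x.1 + p * x.2)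
  · intro k hk
    simp only [Finset.mem_range] at hk
    simp only [Finset.mem_product, Finset.mem_range]
    exact ⟨Nat.mod_lt _ hp, Nat.div_lt_of_lt_mul (by omega)⟩
  · intro x hx
    simp only [Finset.mem_product, Finset.mem_range] at hx
    simp only [Finset.mem_range]
    calc x.1 + p * x.2 < p + p * x.2 := by omega
    _ = p * (x.2 + 1) := by ring
    _ ≤ p * n := Nat.mul_le_mul_left _ (by omega)
  · intro k _; exact Nat.mod_add_div k p
  · intro x hx
    simp only [Finset.mem_product, Finset.mem_range] at hx
    simp [Nat.add_mul_mod_self_left, Nat.mod_eq_of_lt hx.1,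
      Nat.add_mul_div_left _ _ hp, Nat.div_eq_of_lt hx.1]
  · intro k _; rw [Nat.mod_add_div]

lemma deuring_key (p : ℕ) [Fact p.Prime] (a b : ℕ) (ha : a < p) :
    deuring (ZMod p) (a + p * b) =
      deuring (ZMod p) a * Polynomial.expand (ZMod p) p (deuring (ZMod p) b) := by
  have hp : 0 < p := (Fact.out : p.Prime).pos
  set N := a + p * b with hN
  have hmod : N % p = a := by
    rw [hN, Nat.add_mul_mod_self_left, Nat.mod_eq_of_lt ha]
  have hdiv : N / p = b := by
    rw [hN, Nat.add_mul_div_left _ _ hp, Nat.div_eq_of_lt ha, zero_add]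
  -- extend LHS sum to range (p * (b+1))
  have hLHS : deuring (ZMod p) N
      = ∑ k ∈ Finset.range (p * (b + 1)),
          Polynomial.C ((N.choose k : ZMod p) ^ 2) * Polynomial.X ^ k := by
    unfold deuring
    apply Finset.sum_subset
    · intro k hk
      simp only [Finset.mem_range] at *
      have hb : p * (b + 1) = p * b + p := by ring
      omega
    · intro k _ hk
      simp only [Finset.mem_range, not_lt] at hk
      rw [Nat.choose_eq_zero_of_lt (by omega)]
      simp
  -- extend deuring a to range p
  have ha' : deuring (ZMod p) a
      = ∑ i ∈ Finset.range p, Polynomial.C ((a.choose i : ZMod p) ^ 2) * Polynomial.X ^ i := by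
    unfold deuring
    apply Finset.sum_subset
    · intro i hi; simp only [Finset.mem_range] at *; omega
    · intro i _ hi
      simp only [Finset.mem_range, not_lt] at hi
      rw [Nat.choose_eq_zero_of_lt (by omega)]
      simp
  have hexp : Polynomial.expand (ZMod p) p (deuring (ZMod p) b)
      = ∑ j ∈ Finset.range (b + 1),
          Polynomial.C ((b.choose j : ZMod p) ^ 2) * Polynomial.X ^ (p * j) := by
    unfold deuring
    rw [map_sum]
    refine Finset.sum_congr rfl fun j _ => ?_
    simp only [map_mul, map_pow, Polynomial.expand_C, Polynomial.expand_X, ← pow_mul]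
  rw [hLHS, ha', hexp, Finset.sum_mul_sum, sum_range_mul_eq p (b + 1) hp]
  refine Finset.sum_congr rfl fun i hi => Finset.sum_congr rfl fun j hj => ?_
  simp only [Finset.mem_range] at hi hj
  have hlucas : (N.choose (i + p * j) : ZMod p)
      = (a.choose i : ZMod p) * (b.choose j : ZMod p) := by
    have h := Choose.choose_modEq_choose_mod_mul_choose_div_nat (p := p)
      (n := N) (k := i + p * j)
    rw [hmod, hdiv, Nat.add_mul_mod_self_left, Nat.mod_eq_of_lt hi,
      Nat.add_mul_div_left _ _ hp, Nat.div_eq_of_lt hi, zero_add] at h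
    have := (ZMod.natCast_eq_natCast_iff _ _ _).mpr h
    push_cast at this
    exact this
  rw [hlucas, mul_pow, map_mul, pow_add]
  ring

theorem deuring_pow_e (p : ℕ) (hp : p.Prime) (hodd : Odd p) (e : ℕ) (he : 1 ≤ e) :
    deuring (ZMod p) ((p ^ e - 1) / 2) =
      (deuring (ZMod p) ((p - 1) / 2)) ^ (∑ i ∈ Finset.range e, p ^ i) := by
  haveI : Fact p.Prime := ⟨hp⟩
  induction e with
  | zero => omega
  | succ e ih =>
    rcases Nat.eq_or_lt_of_le he with h1 | h1
    · simp [← h1]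
    · have he' : 1 ≤ e := by omega
      have hpe : Odd (p ^ e) := hodd.pow
      obtain ⟨k, hk⟩ := hodd
      obtain ⟨l, hl⟩ := hpe
      have h2 : 2 ≤ p := hp.two_le
      have hl2 : (p ^ e - 1) / 2 = l := by omega
      have hk2 : (p - 1) / 2 = k := by omega
      have hpp : p ^ (e + 1) - 1 = 2 * k + 2 * (p * l) := by
        have h3 : p ^ (e + 1) = p * p ^ e := by ring
        have h4 : p * p ^ e = 2 * (p * l) + p := by rw [hl]; ring
        omega
      have hsplit : (p ^ (e + 1) - 1) / 2 = (p - 1) / 2 + p * ((p ^ e - 1) / 2) := by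
        rw [hk2, hl2, hpp]; omega
      have halt : (p - 1) / 2 < p := by omega
      rw [hsplit, deuring_key p _ _ halt, ih he', map_pow, ZMod.expand_card, ← pow_mul,
        geom_sum_succ, ← pow_succ']
end

section
/- Let K be a field of characteristic p and suppose F ∈ K[λ] has degree d < p and satisfies λ(λ−1)F″ + aλF′ + bF′ + cF = 0 for some constants a,b,c ∈ K. Then every root α of F in K with multiplicity at least 2 satisfies α = 0 or α = 1. -/
open Polynomial

theorem repeatedRoots_of_diffEq (p : ℕ) (hp : p.Prime) (K : Type*) [Field K] [CharP K p]
    (F : Polynomial K) (hdeg : F.natDegree < p) (a b c : K)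
    (hde : Polynomial.X * (Polynomial.X - 1) * Polynomial.derivative (Polynomial.derivative F) +
        Polynomial.C a * Polynomial.X * Polynomial.derivative F +
        Polynomial.C b * Polynomial.derivative F + Polynomial.C c * F = 0)
    (α : K) (hα : 2 ≤ F.rootMultiplicity α) : α = 0 ∨ α = 1 := by
  by_contra hcon
  push_neg at hcon
  obtain ⟨h0, h1⟩ := hcon
  set m := F.rootMultiplicity α with hm
  have hF : F ≠ 0 := by
    intro h
    rw [h, rootMultiplicity_zero] at hm
    omega
  set n := F.natDegree with hn
  have hmn : m ≤ n := by
    have := Polynomial.natDegree_le_of_dvd (F.pow_rootMultiplicity_dvd α) hF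
    simpa [Polynomial.natDegree_pow] using this
  have hcast : ∀ k : ℕ, 0 < k → k ≤ n → (k : K) ≠ 0 := by
    intro k hk hkn h
    rw [CharP.cast_eq_zero_iff K p] at h
    have := Nat.le_of_dvd hk h
    omega
  have hn2 : 2 ≤ n := le_trans hα hmn
  have hcc1 : ((n - 1 : ℕ) : K) + 1 = (n : K) := by
    rw [Nat.cast_sub (by omega : 1 ≤ n)]; ring
  have hcc2 : ((n - 2 : ℕ) : K) + 1 = ((n - 1 : ℕ) : K) := by
    rw [Nat.cast_sub (by omega : 1 ≤ n), Nat.cast_sub (by omega : 2 ≤ n)]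
    push_cast
    ring
  have hG : derivative F ≠ 0 := by
    intro h
    have h2 := congrArg (fun q => Polynomial.coeff q (n - 1)) h
    simp only [Polynomial.coeff_derivative, Polynomial.coeff_zero] at h2
    rw [show n - 1 + 1 = n by omega, hcc1] at h2
    exact (mul_ne_zero (Polynomial.leadingCoeff_ne_zero.mpr hF)
      (hcast n (by omega) le_rfl)) h2
  have hdegG : (derivative F).natDegree = n - 1 := by
    have hlt : (derivative F).natDegree < n := Polynomial.natDegree_derivative_lt (by omega)
    have hge : n - 1 ≤ (derivative F).natDegree := by
      apply Polynomial.le_natDegree_of_ne_zero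
      rw [Polynomial.coeff_derivative, show n - 1 + 1 = n by omega, hcc1]
      exact mul_ne_zero (Polynomial.leadingCoeff_ne_zero.mpr hF) (hcast n (by omega) le_rfl)
    omega
  have hG2 : derivative (derivative F) ≠ 0 := by
    intro h
    have h2 := congrArg (fun q => Polynomial.coeff q (n - 2)) h
    simp only [Polynomial.coeff_derivative, Polynomial.coeff_zero] at h2
    rw [show n - 2 + 1 = n - 1 by omega, hcc2, show n - 1 + 1 = n by omega, hcc1] at h2
    exact (mul_ne_zero (mul_ne_zero (Polynomial.leadingCoeff_ne_zero.mpr hF)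
      (hcast n (by omega) le_rfl)) (hcast (n - 1) (by omega) (by omega))) h2
  have hroot : F.IsRoot α := (Polynomial.rootMultiplicity_pos hF (x := α)).mp (by omega)
  have hmul1 : (derivative F).rootMultiplicity α = m - 1 := by
    apply Polynomial.derivative_rootMultiplicity_of_root_of_mem_nonZeroDivisors hroot
    rw [mem_nonZeroDivisors_iff_ne_zero]
    exact hcast m (by omega) hmn
  have hrootG : (derivative F).IsRoot α :=
    (Polynomial.rootMultiplicity_pos hG (x := α)).mp (by omega)
  have hmul2 : (derivative (derivative F)).rootMultiplicity α = m - 2 := by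
    have h2 := Polynomial.derivative_rootMultiplicity_of_root_of_mem_nonZeroDivisors hrootG
      (by rw [mem_nonZeroDivisors_iff_ne_zero, hmul1]; exact hcast (m - 1) (by omega) (by omega))
    rw [hmul1] at h2
    omega
  have hdvd : (X - C α) ^ (m - 1) ∣ (X * (X - 1) * derivative (derivative F)) := by
    have heq : X * (X - 1) * derivative (derivative F) =
        -(C a * X * derivative F + C b * derivative F + C c * F) := by
      linear_combination hde
    rw [heq, dvd_neg]
    have hdG : (X - C α) ^ (m - 1) ∣ derivative F := by
      rw [← hmul1]
      exact (derivative F).pow_rootMultiplicity_dvd α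
    have hdF : (X - C α) ^ (m - 1) ∣ F :=
      dvd_trans (pow_dvd_pow _ (by omega : m - 1 ≤ m)) (F.pow_rootMultiplicity_dvd α)
    exact dvd_add (dvd_add (dvd_mul_of_dvd_right hdG _) (dvd_mul_of_dvd_right hdG _))
      (dvd_mul_of_dvd_right hdF _)
  have hX1ne : (X : K[X]) - 1 ≠ 0 := by
    intro h
    have h2 := congrArg (Polynomial.eval (0 : K)) h
    simp at h2
  have hXne : (X : K[X]) * (X - 1) * derivative (derivative F) ≠ 0 :=
    mul_ne_zero (mul_ne_zero X_ne_zero hX1ne) hG2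
  have hle : m - 1 ≤ (X * (X - 1) * derivative (derivative F)).rootMultiplicity α :=
    (Polynomial.le_rootMultiplicity_iff hXne).mpr hdvd
  have hmulX : Polynomial.rootMultiplicity α (X : K[X]) = 0 := by
    apply Polynomial.rootMultiplicity_eq_zero
    simp [Polynomial.IsRoot, h0]
  have hmulX1 : Polynomial.rootMultiplicity α ((X : K[X]) - 1) = 0 := by
    apply Polynomial.rootMultiplicity_eq_zero
    simp [Polynomial.IsRoot, sub_eq_zero, h1]
  rw [Polynomial.rootMultiplicity_mul hXne,
      Polynomial.rootMultiplicity_mul (mul_ne_zero X_ne_zero hX1ne),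
      hmulX, hmulX1, hmul2] at hle
  omega
end

section
/- For every integer n ≥ 0, the Deuring polynomial H = H{n} ∈ ℤ[λ] satisfies the differential equation λ(λ−1)H″ + (λ(1−2n) − 1)H′ + n² H = 0. -/
open Polynomial Finset
lemma coeff_deuring (n k : ℕ) : (deuring ℤ n).coeff k = (n.choose k : ℤ)^2 := by
  unfold deuring
  rw [finset_sum_coeff]
  simp only [coeff_C_mul, coeff_X_pow, mul_ite, mul_one, mul_zero]
  rw [Finset.sum_ite_eq (Finset.range (n+1)) k]
  rcases lt_or_ge k (n+1) with h | h
  · simp [Finset.mem_range.mpr h]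
  · simp [Finset.mem_range, not_lt.mpr h, Nat.choose_eq_zero_of_lt (by omega : n < k)]

lemma coeff_D1 (n k : ℕ) :
    (Polynomial.derivative (deuring ℤ n)).coeff k = (n.choose (k+1) : ℤ)^2 * ((k:ℤ)+1) := by
  rw [coeff_derivative, coeff_deuring]

lemma coeff_D2 (n k : ℕ) :
    (Polynomial.derivative (Polynomial.derivative (deuring ℤ n))).coeff k
      = (n.choose (k+2) : ℤ)^2 * ((k:ℤ)+2) * ((k:ℤ)+1) := by
  rw [coeff_derivative, coeff_D1]; push_cast; ring

lemma key (n k : ℕ) :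
    ((n.choose k : ℤ))^2 * ((n:ℤ) - k)^2 = (n.choose (k+1) : ℤ)^2 * ((k:ℤ)+1)^2 := by
  rcases le_or_gt k n with h | h
  · have h2 : (n.choose (k+1) : ℤ) * ((k:ℤ)+1) = (n.choose k : ℤ) * ((n:ℤ) - k) := by
      have := congrArg (Nat.cast : ℕ → ℤ) (Nat.choose_succ_right_eq n k)
      push_cast [Nat.cast_sub h] at this
      linarith
    linear_combination (-(((n.choose (k+1) : ℤ)) * ((k:ℤ)+1) + (n.choose k : ℤ) * ((n:ℤ)-k))) * h2
  · simp [Nat.choose_eq_zero_of_lt h, Nat.choose_eq_zero_of_lt (by omega : n < k + 1)]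

theorem deuring_diffEq (n : ℕ) :
    Polynomial.X * (Polynomial.X - 1) *
        Polynomial.derivative (Polynomial.derivative (deuring ℤ n)) +
      (Polynomial.X * Polynomial.C (1 - 2 * (n : ℤ)) - 1) *
        Polynomial.derivative (deuring ℤ n) +
      Polynomial.C ((n : ℤ) ^ 2) * deuring ℤ n = 0 := by
  have hE : X * (X - 1) * derivative (derivative (deuring ℤ n)) +
      (X * C (1 - 2*(n:ℤ)) - 1) * derivative (deuring ℤ n) + C ((n:ℤ)^2) * deuring ℤ n
      = derivative (derivative (deuring ℤ n)) * X ^ 2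
        - derivative (derivative (deuring ℤ n)) * X ^ 1
        + C (1 - 2*(n:ℤ)) * (derivative (deuring ℤ n) * X ^ 1)
        - derivative (deuring ℤ n) + C ((n:ℤ)^2) * deuring ℤ n := by
    ring
  rw [hE]
  ext k
  simp only [coeff_add, coeff_sub, coeff_mul_X_pow', coeff_C_mul, coeff_D2, coeff_D1,
    coeff_deuring, coeff_zero]
  match k with
  | 0 =>
    norm_num [Nat.choose_one_right]
  | 1 =>
    have hk := key n 1
    norm_num [Nat.choose_one_right] at hk ⊢
    linear_combination hk
  | (k+2) =>
    simp only [show (2:ℕ) ≤ k+2 by omega, show (1:ℕ) ≤ k+2 by omega, if_pos, if_true,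
      Nat.add_sub_cancel, show k+2-1 = k+1 by omega]
    have hk := key n (k+2)
    push_cast at hk ⊢
    linear_combination hk
end

section
/- For every integer n ≥ 0, the polynomial F = F{n} ∈ ℚ[λ] satisfies λ(λ−1)F″ − (1+2n)λF′ + (n+1)² F = 0. -/
open Polynomial Finset

/-- `F{n}(λ) = ∑_{i=0}^n (n choose i)^2 λ^{i+1}/(i+1)`, the formal antiderivative of
the Deuring polynomial `H{n}` with constant term `0`. -/
noncomputable def deuringAnti (n : ℕ) : Polynomial ℚ :=
  ∑ i ∈ Finset.range (n + 1),
    Polynomial.C ((n.choose i : ℚ) ^ 2 / (i + 1)) * Polynomial.X ^ (i + 1)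

lemma deuringAnti_key_choose (n i : ℕ) (hi : i ≤ n) :
    ((n.choose i : ℚ)) * ((n : ℚ) - i) = (n.choose (i+1) : ℚ) * ((i : ℚ) + 1) := by
  have h := Nat.choose_succ_right_eq n i
  have hc : ((n - i : ℕ) : ℚ) = (n : ℚ) - i := by
    rw [Nat.cast_sub hi]
  calc ((n.choose i : ℚ)) * ((n : ℚ) - i) = ((n.choose i * (n - i) : ℕ) : ℚ) := by
        push_cast [hc]; ring
    _ = ((n.choose (i+1) * (i+1) : ℕ) : ℚ) := by rw [← h]
    _ = (n.choose (i+1) : ℚ) * ((i : ℚ) + 1) := by push_cast; ring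

lemma deuringAnti_term_eq (n i : ℕ) (hi : i ≤ n) :
    Polynomial.X * (Polynomial.X - 1) *
        Polynomial.derivative (Polynomial.derivative
          (Polynomial.C ((n.choose i : ℚ) ^ 2 / (i + 1)) * Polynomial.X ^ (i + 1))) -
      Polynomial.C (1 + 2 * (n : ℚ)) * Polynomial.X *
        Polynomial.derivative (Polynomial.C ((n.choose i : ℚ) ^ 2 / (i + 1)) * Polynomial.X ^ (i + 1)) +
      Polynomial.C (((n : ℚ) + 1) ^ 2) *
        (Polynomial.C ((n.choose i : ℚ) ^ 2 / (i + 1)) * Polynomial.X ^ (i + 1))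
    = (Polynomial.C ((n.choose (i+1) : ℚ) ^ 2 * ((i : ℕ) + 1)) * Polynomial.X ^ (i+1))
      - (Polynomial.C ((n.choose i : ℚ) ^ 2 * (i : ℕ)) * Polynomial.X ^ i) := by
  have key := deuringAnti_key_choose n i hi
  have keysq : ((n.choose i : ℚ))^2 * ((n : ℚ) - i)^2 = (n.choose (i+1) : ℚ)^2 * ((i:ℚ) + 1)^2 := by
    have h2 := congrArg (· ^ 2) key
    simpa [mul_pow] using h2
  rcases i with _ | j
  · have keyC := congrArg Polynomial.C keysq
    simp only [Polynomial.derivative_C_mul, Polynomial.derivative_X_pow, Nat.add_sub_cancel,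
      pow_one, Polynomial.derivative_X, Nat.choose_zero_right, Nat.cast_one, Nat.cast_zero,
      Nat.choose_one_right, pow_zero]
    norm_num
    simp only [map_mul, map_add, map_pow, map_one, map_sub, map_ofNat, map_natCast,
      Polynomial.C_1] at keyC ⊢
    norm_num at keyC
    linear_combination Polynomial.X * keyC
  · have hj2 : ((j : ℚ) + 2) ≠ 0 := by positivity
    have hb : Polynomial.C ((j : ℚ) + 2) * Polynomial.C (((j : ℚ) + 2)⁻¹) = 1 := by
      rw [← Polynomial.C_mul, mul_inv_cancel₀ hj2, Polynomial.C_1]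
    have keyC := congrArg Polynomial.C keysq
    have hc : ((((j+1):ℕ):ℚ) + 1) = ((j:ℚ)+2) := by push_cast; ring
    rw [hc]
    simp only [Polynomial.derivative_C_mul, Polynomial.derivative_X_pow, Nat.add_sub_cancel]
    simp only [Nat.cast_add, Nat.cast_ofNat, Nat.cast_one, div_eq_mul_inv, map_mul, map_add,
        map_pow, map_one, map_sub, map_ofNat, map_natCast, Polynomial.C_1] at keyC hb ⊢
    linear_combination (Polynomial.X^(j+2) * Polynomial.C (((j:ℚ)+2)⁻¹)) * keyC + (Polynomial.X^(j+2) * (n.choose (j+2) : Polynomial ℚ)^2 * ((j : Polynomial ℚ)+2) - Polynomial.X^(j+1) * (n.choose (j+1) : Polynomial ℚ)^2 * ((j : Polynomial ℚ)+1)) * hb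

theorem deuringAnti_diffEq (n : ℕ) :
    Polynomial.X * (Polynomial.X - 1) *
        Polynomial.derivative (Polynomial.derivative (deuringAnti n)) -
      Polynomial.C (1 + 2 * (n : ℚ)) * Polynomial.X *
        Polynomial.derivative (deuringAnti n) +
      Polynomial.C (((n : ℚ) + 1) ^ 2) * deuringAnti n = 0 := by
  set g : ℕ → Polynomial ℚ :=
    fun k => Polynomial.C ((n.choose k : ℚ) ^ 2 * (k : ℕ)) * Polynomial.X ^ k with hg
  have main : Polynomial.X * (Polynomial.X - 1) *
        Polynomial.derivative (Polynomial.derivative (deuringAnti n)) -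
      Polynomial.C (1 + 2 * (n : ℚ)) * Polynomial.X *
        Polynomial.derivative (deuringAnti n) +
      Polynomial.C (((n : ℚ) + 1) ^ 2) * deuringAnti n
      = ∑ i ∈ Finset.range (n+1), (g (i+1) - g i) := by
    unfold deuringAnti
    rw [map_sum, map_sum, Finset.mul_sum, Finset.mul_sum, Finset.mul_sum, ← Finset.sum_sub_distrib,
      ← Finset.sum_add_distrib]
    refine Finset.sum_congr rfl fun i hi => ?_
    have hin : i ≤ n := Nat.lt_succ_iff.mp (Finset.mem_range.mp hi)
    simpa only [hg, Nat.cast_add, Nat.cast_one] using deuringAnti_term_eq n i hin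
  rw [main, Finset.sum_range_sub g (n+1)]
  simp [hg, Nat.choose_succ_self]
end

section
/- Fix a prime p and an integer n with 0 < n < p/2, and let K be a field of characteristic p. Then H{n} and H{n−1}, viewed in K[λ], are coprime (they share no common root over the algebraic closure of K). -/
open Polynomial Finset

lemma deuring_coeff (R : Type*) [CommRing R] (m i : ℕ) :
    (deuring R m).coeff i = ((m.choose i : R)) ^ 2 := by
  rw [deuring, Polynomial.finset_sum_coeff]
  simp only [Polynomial.coeff_C_mul, Polynomial.coeff_X_pow, mul_ite, mul_one, mul_zero]
  rw [Finset.sum_ite_eq (Finset.range (m + 1)) i (fun j => ((m.choose j : R)) ^ 2)]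
  by_cases h : i ≤ m
  · simp [Nat.lt_succ_of_le h]
  · rw [if_neg (by simpa [Nat.lt_succ_iff] using h),
      Nat.choose_eq_zero_of_lt (show m < i by omega)]
    simp

/-- Contiguous relation for squared binomial coefficients. -/
lemma choose_sq_rel (m i : ℕ) :
    (m.choose i : ℤ) * m.choose (i + 1) + (m.choose (i + 1) : ℤ) * m.choose (i + 2)
      + ((m : ℤ) + 2) * m.choose i * m.choose (i + 2)
      = (m : ℤ) * (m.choose (i + 1) : ℤ) ^ 2 := by
  have R1 : ∀ j : ℕ, ((j : ℚ) + 1) * m.choose (j + 1) = ((m : ℚ) - j) * m.choose j := by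
    intro j
    have h1 : (m + 1) * m.choose j = (m + 1).choose (j + 1) * (j + 1) :=
      Nat.add_one_mul_choose_eq m j
    have h2 : (m + 1).choose (j + 1) = m.choose j + m.choose (j + 1) :=
      Nat.choose_succ_succ m j
    have h1' : ((m : ℚ) + 1) * m.choose j = ((m.choose j : ℚ) + m.choose (j + 1)) * (j + 1) := by
      rw [h2] at h1
      exact_mod_cast h1
    ring_nf
    ring_nf at h1'
    linarith
  rcases le_or_gt m i with h | h
  · have e1 : m.choose (i + 1) = 0 := Nat.choose_eq_zero_of_lt (by omega)
    have e2 : m.choose (i + 2) = 0 := Nat.choose_eq_zero_of_lt (by omega)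
    simp [e1, e2]
  · -- work over ℚ
    have key : (m.choose i : ℚ) * m.choose (i + 1) + (m.choose (i + 1) : ℚ) * m.choose (i + 2)
        + ((m : ℚ) + 2) * m.choose i * m.choose (i + 2)
        = (m : ℚ) * (m.choose (i + 1) : ℚ) ^ 2 := by
      have hi1 : ((i : ℚ) + 1) ≠ 0 := by positivity
      have hi2 : ((i : ℚ) + 1 + 1) ≠ 0 := by positivity
      have hb : (m.choose (i + 1) : ℚ) = ((m : ℚ) - i) * m.choose i / ((i : ℚ) + 1) := by
        field_simp
        linarith [R1 i]
      have hd : (m.choose (i + 2) : ℚ)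
          = ((m : ℚ) - i - 1) * m.choose (i + 1) / ((i : ℚ) + 1 + 1) := by
        have := R1 (i + 1)
        push_cast at this
        field_simp
        linarith
      rw [hd, hb]
      field_simp
      ring
    exact_mod_cast key

/-- The contiguous recurrence for Deuring polynomials over `ℤ`. -/
lemma deuring_rec (m : ℕ) :
    C ((m : ℤ) + 2) * deuring ℤ (m + 2) + C ((m : ℤ) + 1) * ((1 - X) ^ 2 * deuring ℤ m)
      = C (2 * (m : ℤ) + 3) * ((1 + X) * deuring ℤ (m + 1)) := by
  have e1 : (1 - X : ℤ[X]) ^ 2 * deuring ℤ m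
      = deuring ℤ m - C 2 * (X * deuring ℤ m) + X * (X * deuring ℤ m) := by
    have hC2 : (C 2 : ℤ[X]) = 2 := by norm_num
    rw [hC2]; ring
  have e2 : (1 + X : ℤ[X]) * deuring ℤ (m + 1)
      = deuring ℤ (m + 1) + X * deuring ℤ (m + 1) := by ring
  rw [e1, e2]
  ext j
  simp only [coeff_add, coeff_sub, coeff_C_mul]
  rcases j with _ | _ | j
  · simp only [Polynomial.mul_coeff_zero, coeff_X_zero, zero_mul, mul_zero, sub_zero, add_zero,
      deuring_coeff]
    simp only [Nat.choose_zero_right]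
    push_cast
    ring
  · simp only [Polynomial.coeff_X_mul, Polynomial.mul_coeff_zero, coeff_X_zero, zero_mul,
      mul_zero, deuring_coeff]
    simp [Nat.choose_one_right, Nat.choose_zero_right]
    push_cast
    ring
  · simp only [Polynomial.coeff_X_mul, deuring_coeff]
    have p1 : ((m + 1).choose (j + 1) : ℤ) = m.choose j + m.choose (j + 1) := by
      rw [Nat.choose_succ_succ m j]; push_cast; ring
    have p2 : ((m + 1).choose (j + 2) : ℤ) = m.choose (j + 1) + m.choose (j + 2) := by
      rw [Nat.choose_succ_succ m (j + 1)]; push_cast; ring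
    have p3 : ((m + 2).choose (j + 2) : ℤ) = (m + 1).choose (j + 1) + (m + 1).choose (j + 2) := by
      rw [Nat.choose_succ_succ (m + 1) (j + 1)]; push_cast; ring
    rw [p3, p2, p1]
    push_cast
    linear_combination (2 : ℤ) * choose_sq_rel m j

lemma deuring_map (K : Type*) [Field K] (k : ℕ) :
    (deuring ℤ k).map (Int.castRingHom K) = deuring K k := by
  simp [deuring, Polynomial.map_sum]

/-- The recurrence in `K`. -/
lemma deuring_rec_K (K : Type*) [Field K] (m : ℕ) :
    C ((m : K) + 2) * deuring K (m + 2) + C ((m : K) + 1) * ((1 - X) ^ 2 * deuring K m)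
      = C (2 * (m : K) + 3) * ((1 + X) * deuring K (m + 1)) := by
  have h := congrArg (Polynomial.map (Int.castRingHom K)) (deuring_rec m)
  simp only [Polynomial.map_add, Polynomial.map_mul, Polynomial.map_pow, Polynomial.map_sub,
    Polynomial.map_one, Polynomial.map_C, Polynomial.map_X, deuring_map,
    Int.coe_castRingHom] at h
  push_cast at h
  exact h

lemma deuring_eval_one (R : Type*) [CommRing R] (m : ℕ) :
    (deuring R m).eval 1 = ((2 * m).choose m : R) := by
  have hnat : ∑ i ∈ Finset.range (m + 1), (m.choose i) ^ 2 = (2 * m).choose m := by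
    have h := Nat.add_choose_eq m m m
    rw [Finset.Nat.sum_antidiagonal_eq_sum_range_succ_mk] at h
    rw [two_mul, h]
    apply Finset.sum_congr rfl
    intro i hi
    simp only []
    rw [Nat.choose_symm (show i ≤ m by simp at hi; omega), sq]
  simp only [deuring, eval_finset_sum, eval_mul, eval_C, eval_pow, eval_X, one_pow, mul_one]
  rw [← hnat]
  push_cast
  ring

lemma natCast_ne_zero_of_lt {K : Type*} [Field K] {p : ℕ} (hp : p.Prime) [CharP K p]
    {k : ℕ} (h0 : 0 < k) (h : k < p) : (k : K) ≠ 0 := by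
  rw [Ne, CharP.cast_eq_zero_iff K p]
  intro hdvd
  have := Nat.le_of_dvd h0 hdvd
  omega

lemma deuring_eval_one_ne_zero {K : Type*} [Field K] {p : ℕ} (hp : p.Prime) [CharP K p]
    {m : ℕ} (h : 2 * m < p) : (deuring K m).eval 1 ≠ 0 := by
  rw [deuring_eval_one]
  rw [Ne, CharP.cast_eq_zero_iff K p]
  intro hdvd
  have h1 : (2 * m).choose m * (m.factorial * m.factorial) = (2 * m).factorial := by
    have := Nat.choose_mul_factorial_mul_factorial (show m ≤ 2 * m by omega)
    have h2 : 2 * m - m = m := by omega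
    rw [h2, mul_assoc] at this
    exact this
  have hfac : p ∣ (2 * m).factorial := h1 ▸ hdvd.mul_right _
  have := (Nat.Prime.dvd_factorial hp).mp hfac
  omega

lemma isCoprime_one_sub_X {K : Type*} [Field K] {f : K[X]} (h : f.eval 1 ≠ 0) :
    IsCoprime f (1 - X : K[X]) := by
  have hmod : f %ₘ (X - C 1) = C (f.eval 1) := Polynomial.modByMonic_X_sub_C_eq_C_eval f 1
  have hdiv : f %ₘ (X - C 1) + (X - C 1) * (f /ₘ (X - C 1)) = f :=
    Polynomial.modByMonic_add_div f (X - C 1)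
  refine ⟨C (f.eval 1)⁻¹, C (f.eval 1)⁻¹ * (f /ₘ (X - C 1)), ?_⟩
  have hC : C (f.eval 1)⁻¹ * C (f.eval 1) = 1 := by
    rw [← C_mul, inv_mul_cancel₀ h, C_1]
  calc C (f.eval 1)⁻¹ * f + C (f.eval 1)⁻¹ * (f /ₘ (X - C 1)) * (1 - X)
      = C (f.eval 1)⁻¹ * (C (f.eval 1) + (X - C 1) * (f /ₘ (X - C 1)))
        + C (f.eval 1)⁻¹ * (f /ₘ (X - C 1)) * (1 - X) := by rw [hmod] at hdiv; rw [hdiv]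
    _ = C (f.eval 1)⁻¹ * C (f.eval 1) := by rw [C_1]; ring
    _ = 1 := hC

lemma deuring_coprime_aux (p : ℕ) (hp : p.Prime) (K : Type*) [Field K] [CharP K p] :
    ∀ m : ℕ, 2 * (m + 1) < p → IsCoprime (deuring K (m + 1)) (deuring K m) := by
  intro m
  induction m with
  | zero =>
    intro _
    have : deuring K 0 = 1 := by simp [deuring]
    rw [this]
    exact isCoprime_one_right
  | succ m ih =>
    intro hlt
    have h1 : IsCoprime (deuring K (m + 1)) (deuring K m) := ih (by omega)
    have hev : (deuring K (m + 1)).eval 1 ≠ 0 :=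
      deuring_eval_one_ne_zero hp (by omega)
    have h2 : IsCoprime (deuring K (m + 1)) ((1 - X : K[X]) ^ 2) :=
      (isCoprime_one_sub_X hev).pow_right
    have hc1 : ((m : K) + 1) ≠ 0 := by
      have : ((m + 1 : ℕ) : K) ≠ 0 := natCast_ne_zero_of_lt hp (by omega) (by omega)
      push_cast at this; exact this
    have hc2 : ((m : K) + 2) ≠ 0 := by
      have : ((m + 2 : ℕ) : K) ≠ 0 := natCast_ne_zero_of_lt hp (by omega) (by omega)
      push_cast at this; exact this
    have hC1 : IsCoprime (deuring K (m + 1)) (C ((m : K) + 1)) := by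
      refine ⟨0, C ((m : K) + 1)⁻¹, ?_⟩
      rw [zero_mul, zero_add, ← C_mul, inv_mul_cancel₀ hc1, C_1]
    have h3 : IsCoprime (deuring K (m + 1))
        (C ((m : K) + 1) * ((1 - X : K[X]) ^ 2 * deuring K m)) :=
      hC1.mul_right (h2.mul_right h1)
    have hrec := deuring_rec_K K m
    have hEq : C ((m : K) + 2) * deuring K (m + 2)
        = (-(C ((m : K) + 1))) * ((1 - X : K[X]) ^ 2 * deuring K m)
          + (C (2 * (m : K) + 3) * (1 + X)) * deuring K (m + 1) := by
      linear_combination hrec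
    have h3' : IsCoprime (deuring K (m + 1))
        ((-(C ((m : K) + 1))) * ((1 - X : K[X]) ^ 2 * deuring K m)) :=
      hC1.neg_right.mul_right (h2.mul_right h1)
    have h4 : IsCoprime (deuring K (m + 1)) (C ((m : K) + 2) * deuring K (m + 2)) := by
      rw [hEq]
      exact h3'.add_mul_right_right _
    obtain ⟨s, t, hst⟩ := h4
    refine IsCoprime.symm ⟨s, t * C ((m : K) + 2), ?_⟩
    linear_combination hst

theorem deuring_coprime_pred (p : ℕ) (hp : p.Prime) (n : ℕ) (hn0 : 0 < n) (hn : 2 * n < p)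
    (K : Type*) [Field K] [CharP K p] :
    IsCoprime (deuring K n) (deuring K (n - 1)) := by
  obtain ⟨k, rfl⟩ : ∃ k, n = k + 1 := ⟨n - 1, by omega⟩
  simpa using deuring_coprime_aux p hp K k hn
end

section
/- Fix a prime p and an integer n with 0 ≤ n < p/2, and let K be a field of characteristic p. Then the polynomial F{n}, viewed in K[λ], has no repeated roots over the algebraic closure of K. -/
open Polynomial Finset

/-- `F{n}` viewed in `K[λ]`: `∑_{i=0}^n ((n choose i)^2/(i+1)) λ^{i+1}`, where the
coefficients are computed in `K` (this makes sense whenever `i + 1` is invertible in `K`). -/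
noncomputable def deuringAntiK (K : Type*) [Field K] (n : ℕ) : Polynomial K :=
  ∑ i ∈ Finset.range (n + 1),
    Polynomial.C ((n.choose i : K) ^ 2 / ((i : K) + 1)) * Polynomial.X ^ (i + 1)

section Aux

variable {K : Type*} [Field K] {p : ℕ} [CharP K p]

lemma da_cast_ne_zero (hp : p.Prime) {m : ℕ} (h0 : 0 < m) (h : m < p) : (m : K) ≠ 0 := by
  rw [Ne, CharP.cast_eq_zero_iff K p]
  intro hdvd
  exact absurd (Nat.le_of_dvd h0 hdvd) (by omega)

lemma da_derivative (hp : p.Prime) {n : ℕ} (hn : 2 * n < p) :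
    derivative (deuringAntiK K n) =
      ∑ i ∈ Finset.range (n + 1), C ((n.choose i : K) ^ 2) * X ^ i := by
  have hp2 := hp.two_le
  unfold deuringAntiK
  rw [derivative_sum]
  refine Finset.sum_congr rfl fun i hi => ?_
  rw [Finset.mem_range] at hi
  have hi1 : ((i : K) + 1) ≠ 0 := by
    have := da_cast_ne_zero (K := K) hp (show 0 < i + 1 by omega) (show i + 1 < p by omega)
    push_cast at this
    exact this
  rw [derivative_C_mul_X_pow]
  simp only [Nat.add_sub_cancel]
  congr 1
  push_cast
  rw [div_mul_cancel₀ _ hi1]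

lemma da_identity (hp : p.Prime) {n : ℕ} (hn : 2 * n < p) :
    X * (1 - X) * derivative (derivative (deuringAntiK K n))
      + C ((2 * n + 1 : ℕ) : K) * X * derivative (deuringAntiK K n)
      = C (((n + 1 : ℕ) : K) ^ 2) * deuringAntiK K n := by
  have hp2 := hp.two_le
  rw [da_derivative hp hn, derivative_sum]
  simp only [derivative_C_mul_X_pow]
  have step1 : X * (1 - X) * ∑ i ∈ Finset.range (n + 1),
      C ((n.choose i : K) ^ 2 * (i : K)) * X ^ (i - 1)
      = (∑ i ∈ Finset.range (n + 1), C ((n.choose i : K) ^ 2 * (i : K)) * X ^ i)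
        - ∑ i ∈ Finset.range (n + 1), C ((n.choose i : K) ^ 2 * (i : K)) * X ^ (i + 1) := by
    rw [Finset.mul_sum, ← Finset.sum_sub_distrib]
    refine Finset.sum_congr rfl fun i _ => ?_
    cases i with
    | zero => simp
    | succ j =>
        simp only [Nat.add_sub_cancel, pow_succ]
        ring
  have step2 : (∑ i ∈ Finset.range (n + 1), C ((n.choose i : K) ^ 2 * (i : K)) * X ^ i)
      = ∑ i ∈ Finset.range (n + 1), C ((n.choose (i + 1) : K) ^ 2 * ((i : K) + 1)) * X ^ (i + 1) := by
    rw [Finset.sum_range_succ' (fun i => C ((n.choose i : K) ^ 2 * (i : K)) * X ^ i) n,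
      Finset.sum_range_succ]
    have h0 : C ((n.choose 0 : K) ^ 2 * ((0 : ℕ) : K)) * X ^ 0 = 0 := by simp
    have hn0 : C ((n.choose (n + 1) : K) ^ 2 * ((n : K) + 1)) * X ^ (n + 1) = 0 := by
      simp [Nat.choose_succ_self]
    rw [h0, hn0, add_zero, add_zero]
    refine Finset.sum_congr rfl fun i _ => ?_
    push_cast
    ring
  rw [step1, step2]
  unfold deuringAntiK
  rw [Finset.mul_sum, Finset.mul_sum, ← Finset.sum_sub_distrib, ← Finset.sum_add_distrib]
  refine Finset.sum_congr rfl fun i hi => ?_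
  rw [Finset.mem_range] at hi
  have hi' : i ≤ n := by omega
  have hi1 : ((i : K) + 1) ≠ 0 := by
    have := da_cast_ne_zero (K := K) hp (show 0 < i + 1 by omega) (show i + 1 < p by omega)
    push_cast at this
    exact this
  have h1 : (n.choose (i + 1) : K) * ((i : K) + 1) = (n.choose i : K) * ((n : K) - (i : K)) := by
    have h3 : ((n.choose (i + 1) * (i + 1) : ℕ) : K) = ((n.choose i * (n - i) : ℕ) : K) :=
      congrArg Nat.cast (Nat.choose_succ_right_eq n i)
    rw [Nat.cast_mul, Nat.cast_mul, Nat.cast_sub hi'] at h3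
    push_cast at h3
    exact h3
  have hc : (n.choose (i + 1) : K) ^ 2 * ((i : K) + 1) - (n.choose i : K) ^ 2 * (i : K)
      + ((2 * n + 1 : ℕ) : K) * ((n.choose i : K) ^ 2)
      = ((n + 1 : ℕ) : K) ^ 2 * ((n.choose i : K) ^ 2 / ((i : K) + 1)) := by
    push_cast
    field_simp
    linear_combination ((n.choose (i + 1) : K) * ((i : K) + 1)
      + (n.choose i : K) * ((n : K) - (i : K))) * h1
  have hgoal : C ((n.choose (i + 1) : K) ^ 2 * ((i : K) + 1)) - C ((n.choose i : K) ^ 2 * (i : K))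
      + C (((2 * n + 1 : ℕ) : K) * ((n.choose i : K) ^ 2))
      = C (((n + 1 : ℕ) : K) ^ 2 * ((n.choose i : K) ^ 2 / ((i : K) + 1))) := by
    rw [← map_sub, ← map_add]
    exact congrArg C hc
  calc C ((n.choose (i + 1) : K) ^ 2 * ((i : K) + 1)) * X ^ (i + 1)
        - C ((n.choose i : K) ^ 2 * (i : K)) * X ^ (i + 1)
        + C ((2 * n + 1 : ℕ) : K) * X * (C ((n.choose i : K) ^ 2) * X ^ i)
      = (C ((n.choose (i + 1) : K) ^ 2 * ((i : K) + 1)) - C ((n.choose i : K) ^ 2 * (i : K))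
          + C (((2 * n + 1 : ℕ) : K) * ((n.choose i : K) ^ 2))) * X ^ (i + 1) := by
        simp only [map_mul, pow_succ]
        ring
    _ = C (((n + 1 : ℕ) : K) ^ 2 * ((n.choose i : K) ^ 2 / ((i : K) + 1))) * X ^ (i + 1) := by
        rw [hgoal]
    _ = C (((n + 1 : ℕ) : K) ^ 2) * (C ((n.choose i : K) ^ 2 / ((i : K) + 1)) * X ^ (i + 1)) := by
        rw [map_mul, mul_assoc]

end Aux

theorem deuringAnti_squarefree (p : ℕ) (hp : p.Prime) (n : ℕ) (hn : 2 * n < p)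
    (K : Type*) [Field K] [CharP K p] :
    Squarefree ((deuringAntiK K n).map (algebraMap K (AlgebraicClosure K))) := by
  classical
  have hp2 := hp.two_le
  set L := AlgebraicClosure K with hL
  set φ := algebraMap K L with hφ
  set f := (deuringAntiK K n).map φ with hfdef
  have hdf : derivative f = ∑ i ∈ Finset.range (n + 1), C ((n.choose i : L) ^ 2) * X ^ i := by
    rw [hfdef, derivative_map, da_derivative hp hn, Polynomial.map_sum]
    refine Finset.sum_congr rfl fun i _ => ?_
    simp [map_C]
    rw [map_natCast]
  have hdf0 : eval 0 (derivative f) = 1 := by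
    rw [hdf, eval_finset_sum]
    rw [Finset.sum_eq_single 0]
    · simp
    · intro b _ hb
      simp [zero_pow hb]
    · intro h
      exact absurd (Finset.mem_range.mpr (by omega)) h
  have hf0 : f ≠ 0 := by
    intro h
    rw [h] at hdf0
    simp at hdf0
  have hdeg : f.natDegree ≤ n + 1 := by
    refine le_trans natDegree_map_le ?_
    unfold deuringAntiK
    refine natDegree_sum_le_of_forall_le _ _ fun i hi => ?_
    refine le_trans (natDegree_C_mul_le _ _) ?_
    rw [natDegree_X_pow]
    exact Nat.add_le_add_right (Nat.lt_succ_iff.mp (Finset.mem_range.mp hi)) 1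
  have hId : X * (1 - X) * derivative (derivative f)
      + C ((2 * n + 1 : ℕ) : L) * X * derivative f
      = C (((n + 1 : ℕ) : L) ^ 2) * f := by
    have h := congrArg (Polynomial.map φ) (da_identity (K := K) hp hn)
    rw [map_natCast C, map_pow, map_natCast C]
    simpa [Polynomial.map_add, Polynomial.map_mul, Polynomial.map_sub, Polynomial.map_one,
      map_C, ← derivative_map, map_natCast, map_ofNat, map_pow] using h
  intro x hx
  by_contra hxu
  have hx0 : x ≠ 0 := by
    intro h
    rw [h, zero_mul, zero_dvd_iff] at hx
    exact hf0 hx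
  have hxd : x.degree ≠ 0 := fun h => hxu (isUnit_iff_degree_eq_zero.mpr h)
  obtain ⟨α, hα⟩ := IsAlgClosed.exists_root x hxd
  have hdvd : (X - C α) ^ 2 ∣ f := by
    have h1 : (X - C α) ∣ x := dvd_iff_isRoot.mpr hα
    calc (X - C α) ^ 2 = (X - C α) * (X - C α) := sq _
      _ ∣ x * x := mul_dvd_mul h1 h1
      _ ∣ f := hx
  have hm2 : 2 ≤ rootMultiplicity α f := (le_rootMultiplicity_iff hf0).mpr hdvd
  have hmle : rootMultiplicity α f ≤ n + 1 := by
    have h := natDegree_le_of_dvd (pow_rootMultiplicity_dvd f α) hf0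
    rw [natDegree_pow, natDegree_X_sub_C, mul_one] at h
    omega
  obtain ⟨k, hk⟩ : ∃ k, rootMultiplicity α f = k + 2 := ⟨rootMultiplicity α f - 2, by omega⟩
  set u := f /ₘ (X - C α) ^ rootMultiplicity α f with hu
  have hfu : (X - C α) ^ (k + 2) * u = f := by
    rw [← hk, hu]
    exact pow_mul_divByMonic_rootMultiplicity_eq f α
  have huα : eval α u ≠ 0 := eval_divByMonic_pow_rootMultiplicity_ne_zero α hf0
  have hk2 : ((k : L) + 2) ≠ 0 := by
    have := da_cast_ne_zero (K := L) hp (show 0 < k + 2 by omega) (show k + 2 < p by omega)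
    push_cast at this
    exact this
  have hk1 : ((k : L) + 1) ≠ 0 := by
    have := da_cast_ne_zero (K := L) hp (show 0 < k + 1 by omega) (show k + 1 < p by omega)
    push_cast at this
    exact this
  have hd1 : derivative f = C ((k : L) + 2) * (X - C α) ^ (k + 1) * u
      + (X - C α) ^ (k + 2) * derivative u := by
    rw [← hfu, derivative_mul, derivative_pow, derivative_X_sub_C]
    rw [show k + 2 - 1 = k + 1 by omega]
    push_cast
    ring
  have hd2 : derivative (derivative f) = C ((k : L) + 2) * C ((k : L) + 1) * (X - C α) ^ k * u
      + (C ((k : L) + 2) + C ((k : L) + 2)) * (X - C α) ^ (k + 1) * derivative u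
      + (X - C α) ^ (k + 2) * derivative (derivative u) := by
    rw [hd1]
    simp only [derivative_mul, derivative_pow, derivative_X_sub_C, derivative_C,
      derivative_add, zero_mul, mul_one, zero_add]
    rw [show k + 2 - 1 = k + 1 by omega, show k + 1 - 1 = k by omega]
    push_cast
    ring
  have hq : (X - C α) ≠ 0 := X_sub_C_ne_zero α
  have key : (X * (1 - X)) * (C ((k : L) + 2) * C ((k : L) + 1) * u
        + (C ((k : L) + 2) + C ((k : L) + 2)) * (X - C α) * derivative u
        + (X - C α) ^ 2 * derivative (derivative u))
      + C ((2 * n + 1 : ℕ) : L) * X * (C ((k : L) + 2) * (X - C α) * u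
        + (X - C α) ^ 2 * derivative u)
      = C (((n + 1 : ℕ) : L) ^ 2) * ((X - C α) ^ 2 * u) := by
    refine mul_left_cancel₀ (pow_ne_zero k hq) ?_
    calc (X - C α) ^ k * ((X * (1 - X)) * (C ((k : L) + 2) * C ((k : L) + 1) * u
          + (C ((k : L) + 2) + C ((k : L) + 2)) * (X - C α) * derivative u
          + (X - C α) ^ 2 * derivative (derivative u))
        + C ((2 * n + 1 : ℕ) : L) * X * (C ((k : L) + 2) * (X - C α) * u
          + (X - C α) ^ 2 * derivative u))
        = X * (1 - X) * derivative (derivative f)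
          + C ((2 * n + 1 : ℕ) : L) * X * derivative f := by
          rw [hd2, hd1]
          ring
      _ = C (((n + 1 : ℕ) : L) ^ 2) * f := hId
      _ = (X - C α) ^ k * (C (((n + 1 : ℕ) : L) ^ 2) * ((X - C α) ^ 2 * u)) := by
          rw [← hfu]
          ring
  have hα01 : α = 0 ∨ α = 1 := by
    have h := congrArg (eval α) key
    simp [pow_succ] at h
    rcases h with (h | h) | (h | h) | h
    · exact Or.inl h
    · exact Or.inr (sub_eq_zero.mp h).symm
    · exact absurd h hk2
    · exact absurd h hk1
    · exact absurd h huα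
  have hdfα : eval α (derivative f) = 0 := by
    rw [hd1]
    simp [pow_succ]
  rcases hα01 with h0 | h1
  · rw [h0, hdf0] at hdfα
    exact one_ne_zero hdfα
  · have hev1 : eval 1 (derivative f) = (((2 * n).choose n : ℕ) : L) := by
      rw [hdf]
      simp only [eval_finset_sum, eval_mul, eval_pow, eval_C, eval_X, one_pow, mul_one]
      have hsum : ∑ i ∈ Finset.range (n + 1), (n.choose i) * (n.choose i) = (n + n).choose n := by
        rw [Nat.add_choose_eq, Finset.Nat.sum_antidiagonal_eq_sum_range_succ_mk]
        refine Finset.sum_congr rfl fun i hi => ?_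
        rw [Finset.mem_range] at hi
        rw [Nat.choose_symm (by omega : i ≤ n)]
      rw [Nat.two_mul n, ← hsum]
      push_cast
      exact (Finset.sum_congr rfl fun i _ => (by rw [Nat.cast_mul, pow_two] :
        ((n.choose i : ℕ) : L) ^ 2 = ((n.choose i * n.choose i : ℕ) : L))).trans
        (by exact (Nat.cast_sum (R := L) _ _).symm : (∑ i ∈ Finset.range (n + 1), ((n.choose i * n.choose i : ℕ) : L))
          = ((∑ i ∈ Finset.range (n + 1), n.choose i * n.choose i : ℕ) : L))
    have hne : (((2 * n).choose n : ℕ) : L) ≠ 0 := by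
      rw [Ne, CharP.cast_eq_zero_iff L p]
      intro hdvd
      have h3 : (2 * n).choose n * Nat.factorial n * Nat.factorial n = Nat.factorial (2 * n) := by
        have h4 := Nat.choose_mul_factorial_mul_factorial (show n ≤ 2 * n by omega)
        rwa [show 2 * n - n = n by omega] at h4
      have h2 : p ∣ Nat.factorial (2 * n) := hdvd.trans ⟨Nat.factorial n * Nat.factorial n, by rw [← h3]; ring⟩
      have := (Nat.Prime.dvd_factorial hp).mp h2
      omega
    rw [h1, hev1] at hdfα
    exact hne hdfα
end

section
/- Let p be an odd prime, K an algebraically closed field of characteristic p, a ∈ K with a ≠ 0 and a ≠ 1, and f = xy(x+y)(x+ay) ∈ K[x,y]. If H{(p−1)/2}(a) ≠ 0, then the F-pure threshold of f at the origin equals 1/2. -/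
section FrozenDefs
open MvPolynomial Polynomial Finset

/-- The F-pure threshold at the origin of a bivariate polynomial over a field of
characteristic `p`: `sup { N/p^e : f^N ∉ (x^{p^e}, y^{p^e}) }`. -/
noncomputable def fpt (p : ℕ) {K : Type*} [Field K] (f : MvPolynomial (Fin 2) K) : ℝ :=
  sSup {r : ℝ | ∃ N e : ℕ, 0 < N ∧ 0 < e ∧ r = (N : ℝ) / (p : ℝ) ^ e ∧
    f ^ N ∉ Ideal.span {(MvPolynomial.X 0 : MvPolynomial (Fin 2) K) ^ p ^ e,
      (MvPolynomial.X 1 : MvPolynomial (Fin 2) K) ^ p ^ e}}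

end FrozenDefs

noncomputable section FPTAux
open MvPolynomial Finset
variable {K : Type*} [Field K]

/-- exponent pair as a finsupp -/
def mm (s t : ℕ) : Fin 2 →₀ ℕ := Finsupp.single 0 s + Finsupp.single 1 t

@[simp] lemma mm_apply_zero (s t : ℕ) : mm s t 0 = s := by
  simp [mm, Finsupp.single_apply]

@[simp] lemma mm_apply_one (s t : ℕ) : mm s t 1 = t := by
  simp [mm, Finsupp.single_apply]

lemma eq_mm (d : Fin 2 →₀ ℕ) : d = mm (d 0) (d 1) := by
  ext i; fin_cases i <;> simp

lemma mm_inj {s t s' t' : ℕ} (h : mm s t = mm s' t') : s = s' ∧ t = t' := by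
  constructor
  · have := congrArg (fun d => d 0) h; simpa using this
  · have := congrArg (fun d => d 1) h; simpa using this

lemma mm_add (s t s' t' : ℕ) : mm s t + mm s' t' = mm (s + s') (t + t') := by
  ext i; fin_cases i <;> simp

lemma mm_smul (c s t : ℕ) : c • mm s t = mm (c * s) (c * t) := by
  ext i; fin_cases i <;> simp

lemma monomial_mm (s t : ℕ) (c : K) :
    (monomial (mm s t) c : MvPolynomial (Fin 2) K) = C c * X 0 ^ s * X 1 ^ t := by
  simp [mm, X_pow_eq_monomial, monomial_mul, C_mul_monomial]

lemma mem_span_iff (q : ℕ) (g : MvPolynomial (Fin 2) K) :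
    g ∈ Ideal.span {(X 0 : MvPolynomial (Fin 2) K) ^ q, (X 1 : MvPolynomial (Fin 2) K) ^ q} ↔
      ∀ d ∈ g.support, q ≤ d 0 ∨ q ≤ d 1 := by
  have himg : ({(X 0 : MvPolynomial (Fin 2) K) ^ q, (X 1 : MvPolynomial (Fin 2) K) ^ q} : Set _)
      = (fun s => monomial s (1:K)) '' {Finsupp.single 0 q, Finsupp.single 1 q} := by
    simp [Set.image_insert_eq, X_pow_eq_monomial]
  rw [himg, mem_ideal_span_monomial_image]
  constructor
  · intro h d hd
    obtain ⟨s, hs, hle⟩ := h d hd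
    rcases hs with rfl | rfl
    · exact Or.inl (Finsupp.single_le_iff.mp hle)
    · exact Or.inr (Finsupp.single_le_iff.mp hle)
  · intro h d hd
    rcases h d hd with h0 | h0
    · exact ⟨Finsupp.single 0 q, by simp, Finsupp.single_le_iff.mpr h0⟩
    · exact ⟨Finsupp.single 1 q, by simp, Finsupp.single_le_iff.mpr h0⟩

end FPTAux

noncomputable section FPTAux2
open MvPolynomial Finset
variable {K : Type*} [Field K]

lemma support_sum_eq {g : MvPolynomial (Fin 2) K} {n : ℕ} (hg : g.IsHomogeneous n)
    {d : Fin 2 →₀ ℕ} (hd : d ∈ g.support) : d 0 + d 1 = n := by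
  have h1 := hg (MvPolynomial.mem_support_iff.mp hd)
  have h2 : (Finsupp.weight 1) d = d 0 + d 1 := by
    rw [show (1 : Fin 2 → ℕ) = fun _ => 1 from rfl, ← Finsupp.degree_eq_weight_one]
    rw [Finsupp.degree_apply]
    rw [Finset.sum_subset (Finset.subset_univ d.support)
      (by intro x _ hx; exact Finsupp.notMem_support_iff.mp hx)]
    simp [Fin.sum_univ_two]
  rw [h2] at h1
  exact h1

lemma f_homog (a : K) (n : ℕ) :
    ((X 0 * X 1 * (X 0 + X 1) * (X 0 + C a * X 1) : MvPolynomial (Fin 2) K) ^ n).IsHomogeneous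
      (4 * n) := by
  have h : (X 0 * X 1 * (X 0 + X 1) * (X 0 + C a * X 1) : MvPolynomial (Fin 2) K).IsHomogeneous
      4 := by
    have h1 : (X 0 + X 1 : MvPolynomial (Fin 2) K).IsHomogeneous 1 :=
      (isHomogeneous_X _ _).add (isHomogeneous_X _ _)
    have h2 : (X 0 + C a * X 1 : MvPolynomial (Fin 2) K).IsHomogeneous 1 := by
      refine (isHomogeneous_X _ _).add ?_
      simpa using (isHomogeneous_C (Fin 2) a).mul (isHomogeneous_X _ _)
    have := (((isHomogeneous_X K (0 : Fin 2)).mul (isHomogeneous_X K 1)).mul h1).mul h2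
    simpa using this
  simpa using h.pow n

lemma pow_char_expand (p : ℕ) [Fact p.Prime] [CharP K p] (g : MvPolynomial (Fin 2) K) :
    g ^ p = ∑ d ∈ g.support, monomial (p • d) (coeff d g ^ p) := by
  conv_lhs => rw [g.as_sum]
  rw [sum_pow_char]
  simp [monomial_pow]

lemma smul_finsupp_cancel {p : ℕ} (hp0 : p ≠ 0) {b d : Fin 2 →₀ ℕ} (h : p • b = p • d) :
    b = d := by
  ext i
  have := congrArg (fun f => f i) h
  simp only [Finsupp.smul_apply, smul_eq_mul] at this
  exact Nat.eq_of_mul_eq_mul_left (Nat.pos_of_ne_zero hp0) this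

lemma coeff_pow_char (p : ℕ) [Fact p.Prime] [CharP K p] (g : MvPolynomial (Fin 2) K)
    (d : Fin 2 →₀ ℕ) : coeff (p • d) (g ^ p) = coeff d g ^ p := by
  have hp0 : p ≠ 0 := (Fact.out : p.Prime).ne_zero
  rw [pow_char_expand p g, coeff_sum]
  simp only [coeff_monomial]
  have : ∀ x ∈ g.support, (if p • x = p • d then coeff x g ^ p else 0)
      = if x = d then coeff x g ^ p else 0 := by
    intro x _
    congr 1
    simp only [eq_iff_iff]
    exact ⟨fun h => smul_finsupp_cancel hp0 h, fun h => by rw [h]⟩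
  rw [Finset.sum_congr rfl this, Finset.sum_ite_eq' g.support d]
  by_cases hd : d ∈ g.support
  · rw [if_pos hd]
  · rw [if_neg hd, MvPolynomial.notMem_support_iff.mp hd, zero_pow hp0]

lemma coeff_pow_char_zero (p : ℕ) [Fact p.Prime] [CharP K p] (g : MvPolynomial (Fin 2) K)
    (v : Fin 2 →₀ ℕ) (hv : ∀ w, v ≠ p • w) : coeff v (g ^ p) = 0 := by
  rw [pow_char_expand p g, coeff_sum]
  apply Finset.sum_eq_zero
  intro b _
  rw [coeff_monomial, if_neg]
  exact fun h => hv b h.symm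

end FPTAux2

noncomputable section FPTAux3
open MvPolynomial Finset
variable {K : Type*} [Field K]

lemma expand1 (n : ℕ) : ((X 0 + X 1 : MvPolynomial (Fin 2) K)) ^ n
    = ∑ i ∈ range (n+1), monomial (mm i (n-i)) ((n.choose i : K)) := by
  rw [add_pow]
  refine Finset.sum_congr rfl fun i _ => ?_
  rw [monomial_mm, ← C_eq_coe_nat]
  ring

lemma expand2 (a : K) (n : ℕ) : ((X 0 + C a * X 1 : MvPolynomial (Fin 2) K)) ^ n
    = ∑ j ∈ range (n+1), monomial (mm j (n-j)) ((n.choose j : K) * a ^ (n-j)) := by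
  rw [add_pow]
  refine Finset.sum_congr rfl fun j _ => ?_
  rw [monomial_mm, ← C_eq_coe_nat, mul_pow, ← C_pow, map_mul]
  ring

lemma coeff_f_pow (a : K) (n : ℕ) :
    coeff (mm (2*n) (2*n))
        ((X 0 * X 1 * (X 0 + X 1) * (X 0 + C a * X 1) : MvPolynomial (Fin 2) K) ^ n)
      = ∑ i ∈ range (n+1), (n.choose i : K)^2 * a ^ i := by
  have hf : (X 0 * X 1 * (X 0 + X 1) * (X 0 + C a * X 1) : MvPolynomial (Fin 2) K) ^ n
      = monomial (mm n n) 1 * ((X 0 + X 1)^n * (X 0 + C a * X 1)^n) := by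
    rw [monomial_mm, C_1, mul_pow, mul_pow, mul_pow]; ring
  rw [hf, expand1, expand2, Finset.sum_mul_sum]
  simp only [monomial_mul, mm_add, Finset.mul_sum, one_mul, coeff_sum, coeff_monomial]
  have hstep : ∀ i ∈ range (n+1),
      (∑ j ∈ range (n+1), if mm (n+(i+j)) (n+((n-i)+(n-j))) = mm (2*n) (2*n)
          then (n.choose i : K) * ((n.choose j : K) * a^(n-j)) else 0)
      = (n.choose i : K)^2 * a ^ i := by
    intro i hi
    simp only [mem_range] at hi
    have hrw : ∀ j ∈ range (n+1),
        (if mm (n+(i+j)) (n+((n-i)+(n-j))) = mm (2*n) (2*n)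
          then (n.choose i : K) * ((n.choose j : K) * a^(n-j)) else 0)
        = if j = n - i then (n.choose i : K) * ((n.choose j : K) * a^(n-j)) else 0 := by
      intro j hj
      simp only [mem_range] at hj
      congr 1
      simp only [eq_iff_iff]
      constructor
      · intro h
        have := mm_inj h
        omega
      · intro h
        subst h
        have h1 : n + (i + (n - i)) = 2*n := by omega
        have h2 : n + ((n-i) + (n - (n-i))) = 2*n := by omega
        rw [h1, h2]
    rw [Finset.sum_congr rfl hrw, Finset.sum_ite_eq' (range (n+1)) (n-i), if_pos]
    · have h3 : n - (n - i) = i := by omega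
      rw [h3, Nat.choose_symm (by omega)]
      ring
    · exact mem_range.mpr (by omega)
  exact Finset.sum_congr rfl hstep

end FPTAux3

noncomputable section FPTAux4
open MvPolynomial Finset
variable {K : Type*} [Field K]

lemma nat_coord {p q u w : ℕ} (hp : 3 ≤ p) (hq : 1 ≤ q)
    (hsum : u + 1 + p * w = p * q) (hu : u + 1 ≤ 2*p - 1) : u = p - 1 ∧ w = q - 1 := by
  have h1 : p * q - p * w = p * (q - w) := (Nat.mul_sub p q w).symm
  have hwq : w < q := by
    rcases Nat.lt_or_ge w q with h | h
    · exact h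
    · have := Nat.mul_le_mul_left p h
      omega
  have hk : u + 1 = p * (q - w) := by omega
  have hk1 : q - w = 1 := by
    rcases Nat.lt_or_ge (q - w) 2 with h | h
    · have h0 : q - w = 0 ∨ q - w = 1 := by omega
      rcases h0 with h0 | h0
      · rw [h0, mul_zero] at hk; omega
      · exact h0
    · have := Nat.mul_le_mul_left p h
      omega
  rw [hk1, mul_one] at hk
  have h2 : p * (1 + w) = p * q := by rw [mul_add, mul_one]; omega
  have hw : 1 + w = q := Nat.eq_of_mul_eq_mul_left (by omega) h2
  omega

lemma coeff_rec (p : ℕ) [Fact p.Prime] [CharP K p] (hp3 : 3 ≤ p) (hodd : Odd p)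
    (a : K) (e : ℕ) (he : 1 ≤ e) :
    coeff (mm (p^(e+1) - 1) (p^(e+1) - 1))
        ((X 0 * X 1 * (X 0 + X 1) * (X 0 + C a * X 1) : MvPolynomial (Fin 2) K)
          ^ ((p^(e+1) - 1)/2))
      = coeff (mm (p - 1) (p - 1))
          ((X 0 * X 1 * (X 0 + X 1) * (X 0 + C a * X 1) : MvPolynomial (Fin 2) K) ^ ((p-1)/2))
        * (coeff (mm (p^e - 1) (p^e - 1))
          ((X 0 * X 1 * (X 0 + X 1) * (X 0 + C a * X 1) : MvPolynomial (Fin 2) K)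
            ^ ((p^e - 1)/2))) ^ p := by
  set f : MvPolynomial (Fin 2) K := X 0 * X 1 * (X 0 + X 1) * (X 0 + C a * X 1) with hfdef
  have hqodd : Odd (p ^ e) := hodd.pow
  have hpqodd' : Odd (p * p ^ e) := hodd.mul hqodd
  obtain ⟨n, hn⟩ := hodd  -- p = 2*n + 1
  obtain ⟨m, hm⟩ := hqodd  -- p^e = 2*m + 1
  set q := p ^ e with hq
  have hq1 : 1 ≤ q := Nat.one_le_pow _ _ (by omega)
  have hn' : (p - 1)/2 = n := by omega
  have hm' : (q - 1)/2 = m := by omega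
  have hqq : p ^ (e+1) = p * q := by rw [hq, pow_succ, mul_comm]
  have hpqodd : Odd (p * q) := hpqodd'
  have hsplit : (p ^ (e+1) - 1)/2 = n + p * m := by
    obtain ⟨s, hs⟩ := hpqodd
    have : p * q = p * (2*m+1) := by rw [hm]
    rw [hqq]
    have h2 : p * (2*m+1) = 2*(p*m) + p := by ring
    omega
  have hsplit' : (p * q - 1)/2 = n + p * m := hqq ▸ hsplit
  rw [hqq, hsplit', hn', hm']
  have hfp : (f : MvPolynomial (Fin 2) K) ^ (n + p * m) = f ^ n * (f ^ m) ^ p := by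
    rw [pow_add, mul_comm p m, pow_mul]
  rw [hfp, MvPolynomial.coeff_mul]
  rw [Finset.sum_eq_single_of_mem (mm (p-1) (p-1), (p : ℕ) • mm (q-1) (q-1))]
  · rw [coeff_pow_char]
  · rw [Finset.HasAntidiagonal.mem_antidiagonal, mm_smul, mm_add]
    have h1 : p * (q - 1) = p * q - p := by rw [Nat.mul_sub, mul_one]
    have hple : p ≤ p * q := Nat.le_mul_of_pos_right p (by omega)
    have h2 : p - 1 + (p * q - p) = p * q - 1 := by omega
    rw [h1, h2]
  · rintro ⟨u, v⟩ hb hne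
    rw [Finset.HasAntidiagonal.mem_antidiagonal] at hb
    by_contra hzero
    have hu : coeff u (f ^ n) ≠ 0 := fun h => hzero (by rw [h, zero_mul])
    have hv : coeff v ((f ^ m) ^ p) ≠ 0 := fun h => hzero (by rw [h, mul_zero])
    obtain ⟨w, hw⟩ : ∃ w, v = p • w := by
      by_contra hcon
      push_neg at hcon
      exact hv (coeff_pow_char_zero p _ v hcon)
    subst hw
    have hwcoeff : coeff w (f ^ m) ≠ 0 := by
      rw [coeff_pow_char] at hv
      exact fun h => hv (by rw [h, zero_pow (by omega)])
    -- homogeneity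
    have husum : u 0 + u 1 = 4 * n := by
      have : u 0 + u 1 = 4 * ((p-1)/2) := support_sum_eq (hn' ▸ f_homog a n)
        (MvPolynomial.mem_support_iff.mpr hu)
      omega
    have hb0 := congrArg (fun d => d 0) hb
    have hb1 := congrArg (fun d => d 1) hb
    simp only [Finsupp.add_apply, Finsupp.smul_apply, smul_eq_mul] at hb0 hb1
    have hmm0 : (mm (p * q - 1) (p * q - 1)) 0 = p * q - 1 := mm_apply_zero _ _
    have hmm1 : (mm (p * q - 1) (p * q - 1)) 1 = p * q - 1 := mm_apply_one _ _
    rw [hmm0] at hb0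
    rw [hmm1] at hb1
    have hple : p ≤ p * q := Nat.le_mul_of_pos_right p (by omega)
    have hc0 : u 0 = p - 1 ∧ w 0 = q - 1 :=
      nat_coord hp3 hq1 (by omega) (by omega)
    have hc1 : u 1 = p - 1 ∧ w 1 = q - 1 :=
      nat_coord hp3 hq1 (by omega) (by omega)
    apply hne
    have hueq : u = mm (p-1) (p-1) := by
      rw [eq_mm u, hc0.1, hc1.1]
    have hweq : w = mm (q-1) (q-1) := by
      rw [eq_mm w, hc0.2, hc1.2]
    rw [Prod.ext_iff]
    exact ⟨hueq, by rw [hweq]⟩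

end FPTAux4

open MvPolynomial Polynomial Finset

theorem fpt_deg_four_nonroot (p : ℕ) (hp : p.Prime) (hodd : Odd p)
    (K : Type*) [Field K] [IsAlgClosed K] [CharP K p]
    (a : K) (ha0 : a ≠ 0) (ha1 : a ≠ 1)
    (hH : (deuring K ((p - 1) / 2)).eval a ≠ 0) :
    fpt p (MvPolynomial.X 0 * MvPolynomial.X 1 * (MvPolynomial.X 0 + MvPolynomial.X 1) *
        (MvPolynomial.X 0 + MvPolynomial.C a * MvPolynomial.X 1) : MvPolynomial (Fin 2) K)
      = 1 / 2 := by
  have pPrime : Fact p.Prime := ⟨hp⟩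
  have hp3 : 3 ≤ p := by
    have h2 := hp.two_le
    have hne2 : p ≠ 2 := by rintro rfl; exact (by decide : ¬ Odd 2) hodd
    omega
  simp only [fpt]
  set f : MvPolynomial (Fin 2) K :=
    MvPolynomial.X 0 * MvPolynomial.X 1 * (MvPolynomial.X 0 + MvPolynomial.X 1) *
      (MvPolynomial.X 0 + MvPolynomial.C a * MvPolynomial.X 1) with hfdef
  set S : Set ℝ := {r : ℝ | ∃ N e : ℕ, 0 < N ∧ 0 < e ∧ r = (N : ℝ) / (p : ℝ) ^ e ∧
    f ^ N ∉ Ideal.span {(MvPolynomial.X 0 : MvPolynomial (Fin 2) K) ^ p ^ e,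
      (MvPolynomial.X 1 : MvPolynomial (Fin 2) K) ^ p ^ e}} with hS
  -- deuring evaluation
  have hdeur : ∀ n : ℕ, (deuring K n).eval a
      = ∑ i ∈ range (n + 1), (n.choose i : K) ^ 2 * a ^ i := by
    intro n
    simp [deuring, Polynomial.eval_finset_sum]
  -- c_1
  have hc1 : MvPolynomial.coeff (mm (p - 1) (p - 1)) (f ^ ((p - 1) / 2)) ≠ 0 := by
    have h2 : 2 * ((p - 1) / 2) = p - 1 := by
      rcases hodd with ⟨k, hk⟩; omega
    have hcf := coeff_f_pow (K := K) a ((p - 1) / 2)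
    rw [h2] at hcf
    rw [hcf, ← hdeur]
    exact hH
  -- all c_e
  have hcne : ∀ e : ℕ, 1 ≤ e →
      MvPolynomial.coeff (mm (p ^ e - 1) (p ^ e - 1)) (f ^ ((p ^ e - 1) / 2)) ≠ 0 := by
    intro e he
    induction e with
    | zero => omega
    | succ e ih =>
      rcases Nat.eq_or_lt_of_le he with h | h
      · have he0 : e = 0 := by omega
        subst he0
        simpa using hc1
      · have he1 : 1 ≤ e := by omega
        rw [coeff_rec p hp3 hodd a e he1]
        exact mul_ne_zero hc1 (pow_ne_zero _ (ih he1))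
  -- membership of the approximating sequence
  have helem : ∀ e : ℕ, 1 ≤ e → ((((p ^ e - 1) / 2 : ℕ) : ℝ) / (p : ℝ) ^ e) ∈ S := by
    intro e he
    have hq3 : 3 ≤ p ^ e := le_trans hp3 (Nat.le_self_pow (Nat.one_le_iff_ne_zero.mp he) p)
    refine ⟨(p ^ e - 1) / 2, e, by omega, he, rfl, ?_⟩
    intro hspan
    have := (mem_span_iff (p ^ e) (f ^ ((p ^ e - 1) / 2))).mp hspan
      (mm (p ^ e - 1) (p ^ e - 1)) (MvPolynomial.mem_support_iff.mpr (hcne e he))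
    rw [mm_apply_zero, mm_apply_one] at this
    omega
  have hne : S.Nonempty := ⟨_, helem 1 le_rfl⟩
  -- upper bound
  have hub : ∀ r ∈ S, r ≤ 1 / 2 := by
    rintro r ⟨N, e, hN, he, rfl, hmem⟩
    have hnot := hmem
    rw [mem_span_iff] at hnot
    push_neg at hnot
    obtain ⟨d, hd, hd0, hd1⟩ := hnot
    have hsum : d 0 + d 1 = 4 * N := support_sum_eq (f_homog a N) hd
    have h2N : 2 * N ≤ p ^ e := by omega
    have hppos : (0 : ℝ) < (p : ℝ) ^ e := by positivity
    rw [div_le_div_iff₀ hppos (by norm_num)]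
    have : ((2 * N : ℕ) : ℝ) ≤ ((p ^ e : ℕ) : ℝ) := Nat.cast_le.mpr h2N
    push_cast at this ⊢
    linarith
  have hbdd : BddAbove S := ⟨1 / 2, hub⟩
  apply le_antisymm
  · exact csSup_le hne hub
  · apply le_of_forall_lt
    intro w hw
    have h12w : (0 : ℝ) < 1 - 2 * w := by linarith
    obtain ⟨e, he⟩ := pow_unbounded_of_one_lt (R := ℝ) (y := (p : ℝ)) (1 / (1 - 2 * w))
      (by exact_mod_cast hp.one_lt)
    refine lt_csSup_of_lt hbdd (helem (e + 1) (by omega)) ?_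
    -- w < N / p^(e+1)
    have hqodd : Odd (p ^ (e + 1)) := hodd.pow
    obtain ⟨m, hm⟩ := hqodd
    have hq3 : 3 ≤ p ^ (e + 1) := le_trans hp3 (Nat.le_self_pow (Nat.succ_ne_zero e) p)
    have hNq : ((p ^ (e + 1) - 1) / 2 : ℕ) = m := by omega
    rw [hNq]
    have hcast : ((p ^ (e + 1) : ℕ) : ℝ) = (p : ℝ) ^ (e + 1) := by push_cast; ring
    have hq2 : (p : ℝ) ^ (e + 1) = 2 * (m : ℝ) + 1 := by
      rw [← hcast]; exact_mod_cast congrArg (Nat.cast (R := ℝ)) hm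
    have hmono : (p : ℝ) ^ e ≤ (p : ℝ) ^ (e + 1) := by
      apply pow_le_pow_right₀ (by exact_mod_cast hp.one_lt.le) (by omega)
    have hgt : 1 / (1 - 2 * w) < (p : ℝ) ^ (e + 1) := lt_of_lt_of_le he hmono
    have hA : 1 < (p : ℝ) ^ (e + 1) * (1 - 2 * w) := by
      rw [div_lt_iff₀ h12w] at hgt
      linarith
    have hqpos : (0 : ℝ) < (p : ℝ) ^ (e + 1) := by positivity
    rw [lt_div_iff₀ hqpos]
    nlinarith [hA, hq2]
end

section
/- Let K be an algebraically closed field of characteristic 2 and a ∈ K with a ≠ 0 and a ≠ 1. Then the F-pure threshold of f = xy(x+y)(x+ay) at the origin equals 1/2. -/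
open MvPolynomial Finset

section Aux

variable {K : Type*} [Field K]

/-- Membership criterion for the monomial ideal `(x^q, y^q)`. -/
lemma aux_mem_span_iff (q : ℕ) (p : MvPolynomial (Fin 2) K) :
    p ∈ Ideal.span {(X 0 : MvPolynomial (Fin 2) K) ^ q, (X 1 : MvPolynomial (Fin 2) K) ^ q} ↔
      ∀ m ∈ p.support, q ≤ m 0 ∨ q ≤ m 1 := by
  have h : ({(X 0 : MvPolynomial (Fin 2) K) ^ q, (X 1 : MvPolynomial (Fin 2) K) ^ q} :
      Set (MvPolynomial (Fin 2) K)) =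
      (fun s => monomial s (1 : K)) '' {Finsupp.single 0 q, Finsupp.single 1 q} := by
    rw [Set.image_insert_eq, Set.image_singleton, X_pow_eq_monomial, X_pow_eq_monomial]
  rw [h, mem_ideal_span_monomial_image]
  refine forall₂_congr fun m _ => ?_
  simp [Finsupp.single_le_iff]

/-- The key coefficient computation:  the coefficient of `x^n y^n` in
`(x² + bxy + ay²)^n` for `n = 2^e - 1` equals `b^n`, in characteristic 2. -/
lemma aux_coeff_g_pow [CharP K 2] (a b : K) (e : ℕ) :
    coeff (Finsupp.single 0 (2 ^ e - 1) + Finsupp.single 1 (2 ^ e - 1))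
      ((X 0 ^ 2 + C b * (X 0 * X 1) + C a * X 1 ^ 2 : MvPolynomial (Fin 2) K) ^ (2 ^ e - 1))
      = b ^ (2 ^ e - 1) := by
  induction e with
  | zero => simp
  | succ e ih =>
    set g : MvPolynomial (Fin 2) K := X 0 ^ 2 + C b * (X 0 * X 1) + C a * X 1 ^ 2 with hg
    have h1 : (1 : ℕ) ≤ 2 ^ e := Nat.one_le_two_pow
    have h2 : (2 : ℕ) ^ (e + 1) - 1 = (2 ^ e - 1) + 2 ^ e := by
      rw [pow_succ]; omega
    have hfrob : g ^ 2 ^ e =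
        monomial (Finsupp.single 0 (2 ^ (e + 1))) (1 : K)
        + monomial (Finsupp.single 0 (2 ^ e) + Finsupp.single 1 (2 ^ e)) (b ^ 2 ^ e)
        + monomial (Finsupp.single 1 (2 ^ (e + 1))) (a ^ 2 ^ e) := by
      have hee : 2 * 2 ^ e = 2 ^ (e + 1) := by rw [pow_succ]; ring
      have t1 : ((X 0 : MvPolynomial (Fin 2) K) ^ 2) ^ 2 ^ e =
          monomial (Finsupp.single 0 (2 ^ (e + 1))) (1 : K) := by
        rw [← pow_mul, hee, X_pow_eq_monomial]
      have t2 : ((C b : MvPolynomial (Fin 2) K) * (X 0 * X 1)) ^ 2 ^ e =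
          monomial (Finsupp.single 0 (2 ^ e) + Finsupp.single 1 (2 ^ e)) (b ^ 2 ^ e) := by
        rw [mul_pow, mul_pow, ← map_pow, X_pow_eq_monomial, X_pow_eq_monomial,
          monomial_mul, one_mul, C_mul_monomial, mul_one]
      have t3 : ((C a : MvPolynomial (Fin 2) K) * X 1 ^ 2) ^ 2 ^ e =
          monomial (Finsupp.single 1 (2 ^ (e + 1))) (a ^ 2 ^ e) := by
        rw [mul_pow, ← map_pow, ← pow_mul, hee, X_pow_eq_monomial, C_mul_monomial, mul_one]
      rw [hg, add_pow_char_pow, add_pow_char_pow, t1, t2, t3]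
    rw [h2, pow_add, hfrob]
    rw [mul_add, mul_add, coeff_add, coeff_add]
    rw [coeff_mul_monomial', coeff_mul_monomial', coeff_mul_monomial']
    set M : Fin 2 →₀ ℕ :=
      Finsupp.single 0 (2 ^ e - 1 + 2 ^ e) + Finsupp.single 1 (2 ^ e - 1 + 2 ^ e) with hM
    have hM0 : M 0 = 2 ^ e - 1 + 2 ^ e := by simp [hM]
    have hM1 : M 1 = 2 ^ e - 1 + 2 ^ e := by simp [hM]
    have hc1 : ¬ Finsupp.single (0 : Fin 2) (2 ^ (e + 1)) ≤ M := by
      rw [Finsupp.single_le_iff, hM0, pow_succ]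
      omega
    have hc3 : ¬ Finsupp.single (1 : Fin 2) (2 ^ (e + 1)) ≤ M := by
      rw [Finsupp.single_le_iff, hM1, pow_succ]
      omega
    have hc2 : Finsupp.single (0 : Fin 2) (2 ^ e) + Finsupp.single 1 (2 ^ e) ≤ M := by
      rw [Finsupp.le_def]
      intro i
      fin_cases i <;>
        simp [hM, Finsupp.single_apply] <;> omega
    rw [if_neg hc1, if_neg hc3, if_pos hc2]
    have hsub : M - (Finsupp.single (0 : Fin 2) (2 ^ e) + Finsupp.single 1 (2 ^ e)) =
        Finsupp.single 0 (2 ^ e - 1) + Finsupp.single 1 (2 ^ e - 1) := by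
      ext i
      fin_cases i <;>
        simp [hM, Finsupp.single_apply]
    rw [hsub, ih]
    rw [← pow_add]
    rw [add_zero, zero_add]

/-- Factorization of `f` (valid in characteristic 2, where `-1 = 1`). -/
lemma aux_f_eq [CharP K 2] (a : K) :
    (X 0 * X 1 * (X 0 + X 1) * (X 0 + C a * X 1) : MvPolynomial (Fin 2) K)
      = monomial (Finsupp.single 0 1 + Finsupp.single 1 1) (1 : K) *
        (X 0 ^ 2 + C (a + 1) * (X 0 * X 1) + C a * X 1 ^ 2) := by
  have hm : (monomial (Finsupp.single 0 1 + Finsupp.single 1 1) (1 : K) :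
      MvPolynomial (Fin 2) K) = X 0 * X 1 := by
    rw [show (1 : K) = 1 * 1 by ring, ← monomial_mul, ← X_pow_eq_monomial,
      ← X_pow_eq_monomial, pow_one, pow_one]
  rw [hm, map_add, map_one]
  ring

/-- The coefficient of `x^{2N} y^{2N}` in `f^N` for `N = 2^e - 1`. -/
lemma aux_key_coeff [CharP K 2] (a : K) (e : ℕ) :
    coeff (Finsupp.single 0 (2 * (2 ^ e - 1)) + Finsupp.single 1 (2 * (2 ^ e - 1)))
      ((X 0 * X 1 * (X 0 + X 1) * (X 0 + C a * X 1) : MvPolynomial (Fin 2) K) ^ (2 ^ e - 1))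
      = (a + 1) ^ (2 ^ e - 1) := by
  set N := 2 ^ e - 1 with hN
  rw [aux_f_eq, mul_pow, monomial_pow, one_pow,
    mul_comm ((monomial (N • (Finsupp.single (0 : Fin 2) 1 + Finsupp.single 1 1))) (1 : K)),
    coeff_mul_monomial']
  have hs : (N • (Finsupp.single (0 : Fin 2) 1 + Finsupp.single 1 1)) =
      Finsupp.single (0 : Fin 2) N + Finsupp.single 1 N := by
    ext i
    fin_cases i <;> simp [Finsupp.single_apply]
  rw [hs]
  have hle : Finsupp.single (0 : Fin 2) N + Finsupp.single 1 N ≤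
      Finsupp.single 0 (2 * N) + Finsupp.single 1 (2 * N) := by
    rw [Finsupp.le_def]
    intro i
    fin_cases i <;> simp [Finsupp.single_apply] <;> omega
  rw [if_pos hle]
  have hsub : (Finsupp.single (0 : Fin 2) (2 * N) + Finsupp.single 1 (2 * N)) -
      (Finsupp.single 0 N + Finsupp.single 1 N) =
      Finsupp.single 0 N + Finsupp.single 1 N := by
    ext i
    fin_cases i <;> simp [Finsupp.single_apply] <;> omega
  rw [hsub, hN, aux_coeff_g_pow a (a + 1) e, mul_one]

/-- `f` is homogeneous of degree 4. -/
lemma aux_f_hom (a : K) :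
    (X 0 * X 1 * (X 0 + X 1) * (X 0 + C a * X 1) : MvPolynomial (Fin 2) K).IsHomogeneous 4 := by
  have h1 : (X 0 : MvPolynomial (Fin 2) K).IsHomogeneous 1 := isHomogeneous_X _ _
  have h2 : (X 1 : MvPolynomial (Fin 2) K).IsHomogeneous 1 := isHomogeneous_X _ _
  have h3 : (X 0 + X 1 : MvPolynomial (Fin 2) K).IsHomogeneous 1 := h1.add h2
  have h4 : (X 0 + C a * X 1 : MvPolynomial (Fin 2) K).IsHomogeneous 1 :=
    h1.add (h2.C_mul a)
  exact ((h1.mul h2).mul h3).mul h4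

end Aux

theorem fpt_deg_four_char_two (K : Type*) [Field K] [IsAlgClosed K] [CharP K 2]
    (a : K) (ha0 : a ≠ 0) (ha1 : a ≠ 1) :
    fpt 2 (MvPolynomial.X 0 * MvPolynomial.X 1 * (MvPolynomial.X 0 + MvPolynomial.X 1) *
        (MvPolynomial.X 0 + MvPolynomial.C a * MvPolynomial.X 1) : MvPolynomial (Fin 2) K)
      = 1 / 2 := by
  classical
  set f : MvPolynomial (Fin 2) K :=
    X 0 * X 1 * (X 0 + X 1) * (X 0 + C a * X 1) with hf
  have hb : a + 1 ≠ 0 := by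
    intro h
    apply ha1
    have h2 : (1 : K) + 1 = 0 := CharTwo.add_self_eq_zero 1
    linear_combination h - h2
  -- the set in the definition of fpt
  set S : Set ℝ := {r : ℝ | ∃ N e : ℕ, 0 < N ∧ 0 < e ∧ r = (N : ℝ) / (2 : ℝ) ^ e ∧
    f ^ N ∉ Ideal.span {(X 0 : MvPolynomial (Fin 2) K) ^ 2 ^ e,
      (X 1 : MvPolynomial (Fin 2) K) ^ 2 ^ e}} with hS
  have hfpt : fpt 2 f = sSup S := by
    rw [fpt, hS]
    norm_num
  -- upper bound: every element of S is ≤ 1/2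
  have hbdd : ∀ r ∈ S, r ≤ 1 / 2 := by
    rintro r ⟨N, e, hN, he, rfl, hmem⟩
    by_contra hlt
    push_neg at hlt
    apply hmem
    have hq : (2 : ℕ) ^ e < 2 * N := by
      have hpow : (0 : ℝ) < (2 : ℝ) ^ e := by positivity
      rw [div_lt_div_iff₀ (by norm_num) hpow] at hlt
      have : ((2 : ℕ) ^ e : ℝ) < ((2 * N : ℕ) : ℝ) := by push_cast; linarith
      exact_mod_cast this
    rw [aux_mem_span_iff]
    intro m hm
    have hhom : (f ^ N).IsHomogeneous (4 * N) := by
      rw [show 4 * N = 4 * N from rfl]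
      exact (aux_f_hom a).pow N
    have hdeg : m.degree = 4 * N := by
      by_contra hd
      exact mem_support_iff.mp hm (hhom.coeff_eq_zero hd)
    have hsum : m 0 + m 1 = 4 * N := by
      rw [← hdeg, Finsupp.degree_apply]
      rw [Finset.sum_subset (Finset.subset_univ _)
        (fun i _ hi => Finsupp.notMem_support_iff.mp hi)]
      simp [Fin.sum_univ_two]
    omega
  refine le_antisymm (Real.sSup_le (by rw [hfpt] at *; exact hbdd) (by norm_num)) ?_
  -- lower bound
  rw [hfpt]
  apply le_of_forall_sub_le
  intro ε hε
  obtain ⟨n, hn⟩ := exists_pow_lt_of_lt_one hε (by norm_num : (1 / 2 : ℝ) < 1)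
  set e := n + 2 with he
  set N := 2 ^ (n + 1) - 1 with hN
  have h1 : (1 : ℕ) ≤ 2 ^ (n + 1) := Nat.one_le_two_pow
  have hNpos : 0 < N := by
    have := Nat.one_lt_two_pow' n
    omega
  have hmem : ((N : ℝ) / (2 : ℝ) ^ e) ∈ S := by
    refine ⟨N, e, hNpos, by omega, rfl, ?_⟩
    rw [aux_mem_span_iff]
    push_neg
    refine ⟨Finsupp.single 0 (2 * N) + Finsupp.single 1 (2 * N), ?_, ?_, ?_⟩
    · rw [mem_support_iff, hf, hN, aux_key_coeff a (n + 1)]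
      exact pow_ne_zero _ hb
    · have hap : ((Finsupp.single 0 (2 * N) + Finsupp.single 1 (2 * N) : Fin 2 →₀ ℕ)) 0
          = 2 * N := by simp
      rw [hap, hN, he, pow_succ 2 (n + 1)]
      omega
    · have hap : ((Finsupp.single 0 (2 * N) + Finsupp.single 1 (2 * N) : Fin 2 →₀ ℕ)) 1
          = 2 * N := by simp
      rw [hap, hN, he, pow_succ 2 (n + 1)]
      omega
  have hle : (N : ℝ) / (2 : ℝ) ^ e ≤ sSup S := le_csSup ⟨1 / 2, hbdd⟩ hmem
  have hr : (N : ℝ) / (2 : ℝ) ^ e = 1 / 2 - (1 / 2 : ℝ) ^ e := by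
    rw [hN, he]
    have : ((2 ^ (n + 1) - 1 : ℕ) : ℝ) = 2 ^ (n + 1) - 1 := by
      push_cast [Nat.cast_sub h1]
      ring
    rw [this]
    have hpow : (2 : ℝ) ^ (n + 2) ≠ 0 := by positivity
    have h2n : (1 / 2 : ℝ) ^ n * 2 ^ n = 1 := by rw [← mul_pow]; norm_num
    field_simp
    linear_combination 2 * h2n
  have hεe : (1 / 2 : ℝ) ^ e ≤ (1 / 2 : ℝ) ^ n := by
    apply pow_le_pow_of_le_one (by norm_num) (by norm_num)
    omega
  have := hr ▸ hle
  linarith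
end

section
/- Fix an odd prime p and set n = (p−1)/2. If a ∈ 𝔽̄_p ∖ {0,1} is a root of H{n}, then each of 1/a, 1−a, 1/(1−a), a/(a−1), and (a−1)/a is also a root of H{n}. -/
open Polynomial Finset

lemma eval_deuring {K : Type*} [CommRing K] (n : ℕ) (a : K) :
    (deuring K n).eval a = ∑ i ∈ Finset.range (n + 1), (n.choose i : K) ^ 2 * a ^ i := by
  simp [deuring, eval_finset_sum]

lemma deuring_inv {K : Type*} [Field K] (n : ℕ) {a : K} (ha : a ≠ 0)
    (h : (deuring K n).eval a = 0) : (deuring K n).eval a⁻¹ = 0 := by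
  have key : a ^ n * (deuring K n).eval a⁻¹ = (deuring K n).eval a := by
    rw [eval_deuring, eval_deuring, Finset.mul_sum, ← Finset.sum_range_reflect]
    refine Finset.sum_congr rfl fun i hi => ?_
    simp only [Finset.mem_range, Nat.lt_succ_iff] at hi
    rw [Nat.add_sub_cancel, Nat.choose_symm hi]
    have h2 : a ^ i = a ^ n * a⁻¹ ^ (n - i) := by
      rw [inv_pow]
      have h3 := pow_sub₀ a ha (Nat.sub_le n i)
      rwa [Nat.sub_sub_self hi] at h3
    rw [h2]; ring
  have := key.trans h
  rcases mul_eq_zero.mp this with h1 | h1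
  · exact absurd h1 (pow_ne_zero n ha)
  · exact h1

lemma cast_choose_neg (p : ℕ) [Fact p.Prime] {K : Type*} [Field K] [CharP K p]
    (i : ℕ) : ∀ k, i + k ≤ p - 1 →
    (((p - 1 - i).choose k : ℕ) : K) = (-1) ^ k * (((i + k).choose k : ℕ) : K) := by
  intro k
  induction k with
  | zero => simp
  | succ k ih =>
    intro h
    have hp2 : 2 ≤ p := (Fact.out : p.Prime).two_le
    have hk : i + k ≤ p - 1 := by omega
    have hcast : (((p - 1 - i) - k : ℕ) : K) = -(1 + i + k) := by
      have h1 : ((p - 1 - i) - k : ℕ) = p - (1 + i + k) := by omega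
      rw [h1, Nat.cast_sub (by omega)]
      simp only [CharP.cast_eq_zero K p, zero_sub]
      push_cast
      ring
    have hrec := Nat.choose_succ_right_eq (p - 1 - i) k
    have hrecK : (((p - 1 - i).choose (k+1) : ℕ) : K) * (k + 1)
        = (((p - 1 - i).choose k : ℕ) : K) * ((((p - 1 - i) - k : ℕ)) : K) := by
      exact_mod_cast congrArg (Nat.cast : ℕ → K) hrec
    rw [ih hk, hcast] at hrecK
    have hsucc := Nat.add_one_mul_choose_eq (i + k) k
    have hsuccK : ((i + k + 1 : ℕ) : K) * (((i + k).choose k : ℕ) : K)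
        = (((i + k + 1).choose (k + 1) : ℕ) : K) * ((k + 1 : ℕ) : K) := by
      exact_mod_cast congrArg (Nat.cast : ℕ → K) hsucc
    have hk1 : ((k : K) + 1) ≠ 0 := by
      have : ¬ (p ∣ k + 1) := by
        intro hdvd
        have := Nat.le_of_dvd (by omega) hdvd
        omega
      have := (CharP.cast_eq_zero_iff K p (k + 1)).not.mpr this
      push_cast at this
      exact this
    apply mul_right_cancel₀ hk1
    rw [hrecK]
    have : (((i + (k + 1)).choose (k + 1) : ℕ) : K) = (((i + k + 1).choose (k + 1) : ℕ) : K) := by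
      norm_num [Nat.add_assoc]
    rw [this]
    have h2 : ((i + k + 1 : ℕ) : K) = ((i : K) + k + 1) := by push_cast; ring
    calc (-1) ^ k * (((i + k).choose k : ℕ) : K) * -(1 + (i : K) + k)
        = (-1) ^ (k + 1) * (((i + k + 1 : ℕ) : K) * (((i + k).choose k : ℕ) : K)) := by
          rw [h2]; ring
      _ = (-1) ^ (k + 1) * ((((i + k + 1).choose (k + 1) : ℕ) : K) * ((k + 1 : ℕ) : K)) := by
          rw [hsuccK]
      _ = (-1) ^ (k + 1) * (((i + k + 1).choose (k + 1) : ℕ) : K) * ((k : K) + 1) := by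
          push_cast; ring

lemma sum_choose_sq_mul (n i : ℕ) (hi : i ≤ n) :
    ∑ j ∈ Finset.range (n + 1), n.choose j ^ 2 * j.choose i
      = n.choose i * (2 * n - i).choose (n - i) := by
  have step1 : ∑ j ∈ Finset.range (n + 1), n.choose j ^ 2 * j.choose i
      = ∑ j ∈ Finset.Ico i (n + 1), n.choose j ^ 2 * j.choose i := by
    rw [Finset.range_eq_Ico]
    refine (Finset.sum_subset (Finset.Ico_subset_Ico (Nat.zero_le i) le_rfl)
      fun j hj hj2 => ?_).symm
    simp only [Finset.mem_Ico] at hj hj2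
    have : j < i := by omega
    simp [Nat.choose_eq_zero_of_lt this]
  rw [step1, Finset.sum_Ico_eq_sum_range]
  have step2 : ∀ k ∈ Finset.range (n + 1 - i),
      n.choose (i + k) ^ 2 * (i + k).choose i
        = n.choose i * (n.choose (i + k) * (n - i).choose k) := by
    intro k hk
    simp only [Finset.mem_range] at hk
    have h1 : i + k ≤ n := by omega
    have := Nat.choose_mul (n := n) (Nat.le_add_right i k)
    rw [pow_two, mul_assoc, this]
    have : (i + k) - i = k := by omega
    rw [this]
    ring
  rw [Finset.sum_congr rfl step2, ← Finset.mul_sum]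
  congr 1
  have step3 : ∀ k ∈ Finset.range (n + 1 - i),
      n.choose (i + k) * (n - i).choose k = (n - i).choose k * n.choose ((n - i) - k) := by
    intro k hk
    simp only [Finset.mem_range] at hk
    have h1 : i + k ≤ n := by omega
    have : n - (i + k) = (n - i) - k := by omega
    rw [← Nat.choose_symm h1, this, mul_comm]
  rw [Finset.sum_congr rfl step3]
  have hvdm := Nat.add_choose_eq (n - i) n (n - i)
  rw [Finset.Nat.sum_antidiagonal_eq_sum_range_succ_mk] at hvdm
  have hr : n + 1 - i = (n - i) + 1 := by omega
  have h2n : (n - i) + n = 2 * n - i := by omega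
  rw [hr, ← h2n, hvdm]

lemma coeff_identity (p n i : ℕ) [Fact p.Prime] {K : Type*} [Field K] [CharP K p]
    (hp : p = 2 * n + 1) (hi : i ≤ n) :
    (∑ j ∈ Finset.range (n + 1), ((n.choose j : K) ^ 2 * (j.choose i : K)))
      = (-1) ^ (n - i) * (n.choose i : K) ^ 2 := by
  have hnat := sum_choose_sq_mul n i hi
  have hcast : (∑ j ∈ Finset.range (n + 1), ((n.choose j : K) ^ 2 * (j.choose i : K)))
      = ((n.choose i : K) * ((2 * n - i).choose (n - i) : K)) := by
    exact_mod_cast congrArg (Nat.cast : ℕ → K) hnat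
  rw [hcast]
  have h1 : 2 * n - i = p - 1 - i := by omega
  have h2 : ((2 * n - i).choose (n - i) : K) = (-1) ^ (n - i) * (((i + (n - i)).choose (n - i) : ℕ) : K) := by
    rw [h1]; exact cast_choose_neg p i (n - i) (by omega)
  have h3 : i + (n - i) = n := by omega
  rw [h2, h3, Nat.choose_symm hi]
  ring

lemma deuring_one_sub (p n : ℕ) [Fact p.Prime] {K : Type*} [Field K] [CharP K p]
    (hp : p = 2 * n + 1) (a : K) :
    (deuring K n).eval (1 - a) = (-1) ^ n * (deuring K n).eval a := by
  rw [eval_deuring, eval_deuring]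
  have expand : ∀ j ∈ Finset.range (n + 1),
      (1 - a) ^ j = ∑ i ∈ Finset.range (n + 1), (j.choose i : K) * (-a) ^ i := by
    intro j hj
    simp only [Finset.mem_range, Nat.lt_succ_iff] at hj
    have h1 : (1 - a) ^ j = (-a + 1) ^ j := by ring_nf
    have hext : ∑ i ∈ Finset.range (j + 1), (-a) ^ i * 1 ^ (j - i) * (j.choose i : K)
        = ∑ i ∈ Finset.range (n + 1), (-a) ^ i * 1 ^ (j - i) * (j.choose i : K) := by
      refine Finset.sum_subset (Finset.range_subset_range.mpr (Nat.succ_le_succ hj))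
        (fun i hi hi2 => ?_)
      simp only [Finset.mem_range, Nat.lt_succ_iff] at hi hi2
      have hlt : j < i := by omega
      simp [Nat.choose_eq_zero_of_lt hlt]
    rw [h1, add_pow, hext]
    exact Finset.sum_congr rfl fun i _ => by ring
  have hexp : ∑ j ∈ Finset.range (n + 1), (n.choose j : K) ^ 2 * (1 - a) ^ j
      = ∑ j ∈ Finset.range (n + 1),
          (n.choose j : K) ^ 2 * ∑ i ∈ Finset.range (n + 1), (j.choose i : K) * (-a) ^ i :=
    Finset.sum_congr rfl fun j hj => by rw [expand j hj]
  rw [hexp]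
  simp only [Finset.mul_sum]
  rw [Finset.sum_comm]
  refine Finset.sum_congr rfl fun i hi => ?_
  simp only [Finset.mem_range, Nat.lt_succ_iff] at hi
  have key : ∑ j ∈ Finset.range (n + 1), (n.choose j : K) ^ 2 * ((j.choose i : K) * (-a) ^ i)
      = (∑ j ∈ Finset.range (n + 1), (n.choose j : K) ^ 2 * (j.choose i : K)) * (-a) ^ i := by
    rw [Finset.sum_mul]
    refine Finset.sum_congr rfl fun j _ => by ring
  rw [key, coeff_identity p n i hp hi]
  have : (-a) ^ i = (-1) ^ i * a ^ i := by rw [neg_pow]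
  rw [this]
  have hsign : (-1 : K) ^ (n - i) * (-1) ^ i = (-1) ^ n := by
    rw [← pow_add]
    congr 1
    omega
  calc (-1 : K) ^ (n - i) * (n.choose i : K) ^ 2 * ((-1) ^ i * a ^ i)
      = ((-1 : K) ^ (n - i) * (-1) ^ i) * ((n.choose i : K) ^ 2 * a ^ i) := by ring
    _ = (-1) ^ n * ((n.choose i : K) ^ 2 * a ^ i) := by rw [hsign]

theorem deuring_roots_orbit (p : ℕ) [Fact p.Prime] (hodd : Odd p)
    (a : AlgebraicClosure (ZMod p)) (ha0 : a ≠ 0) (ha1 : a ≠ 1)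
    (hroot : (deuring (AlgebraicClosure (ZMod p)) ((p - 1) / 2)).eval a = 0) :
    (deuring (AlgebraicClosure (ZMod p)) ((p - 1) / 2)).eval a⁻¹ = 0 ∧
    (deuring (AlgebraicClosure (ZMod p)) ((p - 1) / 2)).eval (1 - a) = 0 ∧
    (deuring (AlgebraicClosure (ZMod p)) ((p - 1) / 2)).eval (1 - a)⁻¹ = 0 ∧
    (deuring (AlgebraicClosure (ZMod p)) ((p - 1) / 2)).eval (a / (a - 1)) = 0 ∧
    (deuring (AlgebraicClosure (ZMod p)) ((p - 1) / 2)).eval ((a - 1) / a) = 0 := by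
  set n := (p - 1) / 2 with hn
  have hp2 : 2 ≤ p := (Fact.out : p.Prime).two_le
  obtain ⟨m, hm⟩ := hodd
  have hp : p = 2 * n + 1 := by omega
  haveI : CharP (AlgebraicClosure (ZMod p)) p :=
    charP_of_injective_algebraMap (algebraMap (ZMod p) (AlgebraicClosure (ZMod p))).injective p
  have ha1' : (1 : AlgebraicClosure (ZMod p)) - a ≠ 0 := by
    intro h
    exact ha1 (by linear_combination -h)
  have ha1'' : a - 1 ≠ 0 := sub_ne_zero.mpr ha1
  have h2 : (deuring (AlgebraicClosure (ZMod p)) n).eval (1 - a) = 0 := by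
    rw [deuring_one_sub p n hp a, hroot, mul_zero]
  have h1 : (deuring (AlgebraicClosure (ZMod p)) n).eval a⁻¹ = 0 := deuring_inv n ha0 hroot
  have h3 : (deuring (AlgebraicClosure (ZMod p)) n).eval (1 - a)⁻¹ = 0 := deuring_inv n ha1' h2
  have h4 : (deuring (AlgebraicClosure (ZMod p)) n).eval (a / (a - 1)) = 0 := by
    have heq : a / (a - 1) = 1 - (1 - a)⁻¹ := by
      have hstep : (1 : AlgebraicClosure (ZMod p)) - (1 - a)⁻¹ = ((1 - a) - 1) * (1 - a)⁻¹ := by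
        rw [sub_mul, one_mul, mul_inv_cancel₀ ha1']
      have hinv : (a - 1)⁻¹ = -(1 - a)⁻¹ := by
        rw [← inv_neg]
        congr 1
        ring
      rw [hstep, div_eq_mul_inv, hinv]
      ring
    rw [heq, deuring_one_sub p n hp, h3, mul_zero]
  have h5 : (deuring (AlgebraicClosure (ZMod p)) n).eval ((a - 1) / a) = 0 := by
    have heq : (a - 1) / a = 1 - a⁻¹ := by
      rw [sub_div, div_self ha0, div_eq_mul_inv, one_mul]
    rw [heq, deuring_one_sub p n hp, h1, mul_zero]
  exact ⟨h1, h2, h3, h4, h5⟩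
end
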